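/- arXiv:0710.0409 — 5 statements merged into one kernel-verified Lean document; each statement's English description precedes it below -/
import Mathlib

section
/- Let r ≥ 4 and n ≥ r+1 with n - r even. The graph G = K_{r-3} + ((n-r)/2 · K_2 ∪ P_2) on n vertices does not contain K_{r+1} minus the edge set of U as a subgraph, where U is any graph on k vertices (7 ≤ k ≤ r+1) that contains no 4-cycle and no copy of Z_4 = K_4 - P_2. -/
open SimpleGraph Finset

noncomputable def deg {n : ℕ} (G : SimpleGraph (Fin n)) (v : Fin n) : ℕ :=
  Set.ncard {w | G.Adj v w}

def Contains {α β : Type*} (G : SimpleGraph α) (H : SimpleGraph β) : Prop :=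
  ∃ f : β ↪ α, ∀ ⦃u v : β⦄, H.Adj u v → G.Adj (f u) (f v)

def IsGraphic {n : ℕ} (d : Fin n → ℕ) : Prop :=
  ∃ G : SimpleGraph (Fin n), ∀ i, deg G i = d i

def PotentiallyGraphic {n : ℕ} {β : Type*} (H : SimpleGraph β) (d : Fin n → ℕ) : Prop :=
  ∃ G : SimpleGraph (Fin n), (∀ i, deg G i = d i) ∧ Contains G H

noncomputable def sigmaPot {β : Type*} (H : SimpleGraph β) (n : ℕ) : ℕ :=
  sInf {l : ℕ | Even l ∧ ∀ d : Fin n → ℕ, Antitone d → IsGraphic d →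
    l ≤ ∑ i, d i → PotentiallyGraphic H d}

def C4graph : SimpleGraph (Fin 4) :=
  SimpleGraph.fromEdgeSet {s(0,1), s(1,2), s(2,3), s(0,3)}

def Z4graph : SimpleGraph (Fin 4) :=
  SimpleGraph.fromEdgeSet {s(0,2), s(0,3), s(1,3), s(2,3)}

def K3UP3 : SimpleGraph (Fin 7) :=
  SimpleGraph.fromEdgeSet {s(0,1), s(0,2), s(1,2), s(3,4), s(4,5), s(5,6)}

/-- The graph `K_{r-3} + (m·K_2 ∪ P_2)` on `n = r + 2m` vertices. -/
def laiGraph (r m : ℕ) : SimpleGraph (Fin (r + 2 * m)) :=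
  SimpleGraph.fromRel (fun i j =>
    i.val < r - 3 ∨ j.val < r - 3 ∨
    (r - 3 ≤ i.val ∧ r - 3 ≤ j.val ∧ i.val < r + 2 * m - 3 ∧ j.val < r + 2 * m - 3 ∧
      (i.val - (r - 3)) / 2 = (j.val - (r - 3)) / 2) ∨
    (r + 2 * m - 3 ≤ i.val ∧ r + 2 * m - 3 ≤ j.val ∧
      (i.val = r + 2 * m - 2 ∨ j.val = r + 2 * m - 2)))
def aadj (r n' a b : ℕ) : Prop :=
  a ≠ b ∧ ((a < n' - 3 ∧ b < n' - 3 ∧ (a - (r-3))/2 = (b - (r-3))/2) ∨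
    (n' - 3 ≤ a ∧ n' - 3 ≤ b ∧ (a = n' - 2 ∨ b = n' - 2)))

lemma A_symm {r nn x y : ℕ} (h : aadj r nn x y) : aadj r nn y x := by
  simp only [aadj] at h ⊢; omega

lemma A_uniq {r nn x y z : ℕ} (bx : r-3 ≤ x) (by' : r-3 ≤ y) (bz : r-3 ≤ z)
    (hx : x ≠ nn - 2) (h1 : aadj r nn x y) (h2 : aadj r nn x z) : y = z := by
  simp only [aadj] at h1 h2; omega

lemma NA_mixed {r nn x y : ℕ} (hx : x < nn - 3) (hy : nn - 3 ≤ y) : ¬ aadj r nn x y := by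
  simp only [aadj]; omega

lemma NA_mixed' {r nn x y : ℕ} (hx : nn - 3 ≤ x) (hy : y < nn - 3) : ¬ aadj r nn x y := by
  simp only [aadj]; omega

lemma NA_top {r nn x y : ℕ} (hx : nn - 3 ≤ x) (hy : nn - 3 ≤ y)
    (hx2 : x ≠ nn - 2) (hy2 : y ≠ nn - 2) : ¬ aadj r nn x y := by
  simp only [aadj]; omega

/-- Z-pattern of non-adjacencies: center `c`, extra vertex `w`, leaves `y z`. -/
def Zc (r nn c w y z : ℕ) : Prop :=
  ¬ aadj r nn y z ∧ ¬ aadj r nn w c ∧ ¬ aadj r nn w y ∧ ¬ aadj r nn w z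

/-- C-pattern of non-adjacencies for the partition `{p,q} | {s,t}`. -/
def Cc (r nn p q s t : ℕ) : Prop :=
  ¬ aadj r nn p s ∧ ¬ aadj r nn p t ∧ ¬ aadj r nn q s ∧ ¬ aadj r nn q t

lemma centerKey (r nn a b c d : ℕ) (hr : 4 ≤ r) (hnn : r + 2 ≤ nn)
    (ba : r-3 ≤ a) (bb : r-3 ≤ b) (bc : r-3 ≤ c) (bd : r-3 ≤ d)
    (la : a < nn) (lb : b < nn) (lc : c < nn) (ld : d < nn)
    (dab : a ≠ b) (dac : a ≠ c) (dad : a ≠ d) (dbc : b ≠ c) (dbd : b ≠ d) (dcd : c ≠ d)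
    (hcen : a = nn - 2) :
    (Zc r nn a d b c ∨ Zc r nn a c b d ∨ Zc r nn a b c d) ∨
    (Cc r nn a b c d ∨ Cc r nn a c b d ∨ Cc r nn a d b c) := by
  have ta : nn - 3 ≤ a := by omega
  by_cases tb : nn - 3 ≤ b
  · by_cases tc : nn - 3 ≤ c
    · by_cases td : nn - 3 ≤ d
      · exact absurd tb (by omega)
      · exact Or.inl (Or.inl ⟨NA_top tb tc (by omega) (by omega),
          NA_mixed (by omega) ta, NA_mixed (by omega) tb, NA_mixed (by omega) tc⟩)
    · by_cases td : nn - 3 ≤ d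
      · exact Or.inl (Or.inr (Or.inl ⟨NA_top tb td (by omega) (by omega),
          NA_mixed (by omega) ta, NA_mixed (by omega) tb, NA_mixed (by omega) td⟩))
      · exact Or.inr (Or.inl ⟨NA_mixed' ta (by omega), NA_mixed' ta (by omega),
          NA_mixed' tb (by omega), NA_mixed' tb (by omega)⟩)
  · by_cases tc : nn - 3 ≤ c
    · by_cases td : nn - 3 ≤ d
      · exact Or.inl (Or.inr (Or.inr ⟨NA_top tc td (by omega) (by omega),
          NA_mixed (by omega) ta, NA_mixed (by omega) tc, NA_mixed (by omega) td⟩))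
      · exact Or.inr (Or.inr (Or.inl ⟨NA_mixed' ta (by omega), NA_mixed' ta (by omega),
          NA_mixed' tc (by omega), NA_mixed' tc (by omega)⟩))
    · by_cases td : nn - 3 ≤ d
      · exact Or.inr (Or.inr (Or.inr ⟨NA_mixed' ta (by omega), NA_mixed' ta (by omega),
          NA_mixed' td (by omega), NA_mixed' td (by omega)⟩))
      · -- b, c, d all in the matching part
        by_cases hbc : aadj r nn b c
        · exact Or.inr (Or.inr (Or.inr ⟨NA_mixed' ta (by omega), NA_mixed' ta (by omega),
            (fun h => dcd (A_uniq bb bc bd (by omega) hbc (A_symm h))),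
            (fun h => dbd (A_uniq bc bb bd (by omega) (A_symm hbc) (A_symm h)))⟩))
        · by_cases hbd : aadj r nn b d
          · exact Or.inr (Or.inr (Or.inl ⟨NA_mixed' ta (by omega), NA_mixed' ta (by omega),
              (fun h => dcd (A_uniq bb bc bd (by omega) (A_symm h) hbd)),
              (fun h => dbc (A_uniq bd bb bc (by omega) (A_symm hbd) (A_symm h)))⟩))
          · by_cases hcd : aadj r nn c d
            · exact Or.inr (Or.inl ⟨NA_mixed' ta (by omega), NA_mixed' ta (by omega),
                (fun h => dbd (A_uniq bc bb bd (by omega) (A_symm h) hcd)),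
                (fun h => dbc (A_uniq bd bb bc (by omega) (A_symm h) (A_symm hcd)))⟩)
            · exact Or.inr (Or.inl ⟨NA_mixed' ta (by omega), NA_mixed' ta (by omega),
                hbc, hbd⟩)

lemma nocenterKey (r nn a b c d : ℕ) (hr : 4 ≤ r) (hnn : r + 2 ≤ nn)
    (ba : r-3 ≤ a) (bb : r-3 ≤ b) (bc : r-3 ≤ c) (bd : r-3 ≤ d)
    (la : a < nn) (lb : b < nn) (lc : c < nn) (ld : d < nn)
    (dab : a ≠ b) (dac : a ≠ c) (dad : a ≠ d) (dbc : b ≠ c) (dbd : b ≠ d) (dcd : c ≠ d)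
    (na : a ≠ nn - 2) (nb : b ≠ nn - 2) (nc : c ≠ nn - 2) (nd : d ≠ nn - 2) :
    Cc r nn a b c d ∨ Cc r nn a c b d ∨ Cc r nn a d b c := by
  by_cases hab : aadj r nn a b
  · exact Or.inl ⟨(fun h => dbc (A_uniq ba bb bc na hab h)),
      (fun h => dbd (A_uniq ba bb bd na hab h)),
      (fun h => dac (A_uniq bb ba bc nb (A_symm hab) h)),
      (fun h => dad (A_uniq bb ba bd nb (A_symm hab) h))⟩
  · by_cases hcd : aadj r nn c d
    · exact Or.inl ⟨(fun h => dad (A_uniq bc ba bd nc (A_symm h) hcd)),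
        (fun h => dac (A_uniq bd ba bc nd (A_symm h) (A_symm hcd))),
        (fun h => dbd (A_uniq bc bb bd nc (A_symm h) hcd)),
        (fun h => dbc (A_uniq bd bb bc nd (A_symm h) (A_symm hcd)))⟩
    · by_cases hac : aadj r nn a c
      · exact Or.inr (Or.inl ⟨hab,
          (fun h => dcd (A_uniq ba bc bd na hac h)),
          (fun h => dab (A_uniq bc ba bb nc (A_symm hac) h)),
          (fun h => dad (A_uniq bc ba bd nc (A_symm hac) h))⟩)
      · by_cases hbd : aadj r nn b d
        · exact Or.inr (Or.inl ⟨hab,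
            (fun h => dab (A_uniq bd ba bb nd (A_symm h) (A_symm hbd))),
            (fun h => dcd (A_uniq bb bc bd nb (A_symm h) hbd)),
            (fun h => dbc (A_uniq bd bc bb nd (A_symm h) (A_symm hbd)).symm)⟩)
        · exact Or.inr (Or.inr ⟨hab, hac,
            (fun h => hbd (A_symm h)), (fun h => hcd (A_symm h))⟩)

lemma lai_adj_iff (r m : ℕ) (x y : Fin (r + 2*m)) (hx : r - 3 ≤ x.val) (hy : r - 3 ≤ y.val) :
    (laiGraph r m).Adj x y ↔ aadj r (r + 2*m) x.val y.val := by
  have h1 := x.isLt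
  have h2 := y.isLt
  rw [laiGraph, SimpleGraph.fromRel_adj, Fin.ne_iff_vne]
  simp only [aadj, ne_eq]
  omega

lemma containsC4 {k : ℕ} (U : SimpleGraph (Fin k)) (a b c d : Fin k)
    (hab : a ≠ b) (hcd : c ≠ d)
    (h1 : U.Adj a c) (h2 : U.Adj a d) (h3 : U.Adj b c) (h4 : U.Adj b d) :
    Contains U C4graph := by
  have n1 := h1.ne; have n2 := h2.ne; have n3 := h3.ne; have n4 := h4.ne
  refine ⟨⟨![a, c, b, d], ?_⟩, ?_⟩
  · intro i j hij
    fin_cases i <;> fin_cases j <;> simp_all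
  · intro u v h
    change U.Adj (![a, c, b, d] u) (![a, c, b, d] v)
    simp only [C4graph, SimpleGraph.fromEdgeSet_adj, Set.mem_insert_iff,
      Set.mem_singleton_iff, Sym2.eq, Sym2.rel_iff', Prod.mk.injEq, Prod.swap_prod_mk] at h
    obtain ⟨h, -⟩ := h
    rcases h with (⟨rfl,rfl⟩|⟨rfl,rfl⟩)|(⟨rfl,rfl⟩|⟨rfl,rfl⟩)|(⟨rfl,rfl⟩|⟨rfl,rfl⟩)|(⟨rfl,rfl⟩|⟨rfl,rfl⟩) <;>
      simp [Function.Embedding.coeFn_mk] <;>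
      first | exact h1 | exact h1.symm | exact h2 | exact h2.symm | exact h3 | exact h3.symm | exact h4 | exact h4.symm

lemma containsZ4 {k : ℕ} (U : SimpleGraph (Fin k)) (a b c d : Fin k)
    (had : a ≠ d) (hbd : b ≠ d)
    (h1 : U.Adj a b) (h2 : U.Adj a c) (h3 : U.Adj b c) (h4 : U.Adj c d) :
    Contains U Z4graph := by
  have n1 := h1.ne; have n2 := h2.ne; have n3 := h3.ne; have n4 := h4.ne
  refine ⟨⟨![a, d, b, c], ?_⟩, ?_⟩
  · intro i j hij
    fin_cases i <;> fin_cases j <;> simp_all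
  · intro u v h
    change U.Adj (![a, d, b, c] u) (![a, d, b, c] v)
    simp only [Z4graph, SimpleGraph.fromEdgeSet_adj, Set.mem_insert_iff,
      Set.mem_singleton_iff, Sym2.eq, Sym2.rel_iff', Prod.mk.injEq, Prod.swap_prod_mk] at h
    obtain ⟨h, -⟩ := h
    rcases h with (⟨rfl,rfl⟩|⟨rfl,rfl⟩)|(⟨rfl,rfl⟩|⟨rfl,rfl⟩)|(⟨rfl,rfl⟩|⟨rfl,rfl⟩)|(⟨rfl,rfl⟩|⟨rfl,rfl⟩) <;>
      simp [Function.Embedding.coeFn_mk] <;>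
      first | exact h1 | exact h1.symm | exact h2 | exact h2.symm | exact h3 | exact h3.symm | exact h4 | exact h4.symm

set_option maxHeartbeats 1000000 in
/-- For `r ≥ 4`, `n ≥ r+1` with `n - r` even (`n = r + 2m`), the graph
`K_{r-3} + ((n-r)/2 · K_2 ∪ P_2)` does not contain `K_{r+1} - U` as a subgraph,
for any graph `U` on `k` vertices (`7 ≤ k ≤ r+1`) with no `C_4` and no `Z_4`. -/
theorem stmt_2 (r n k m : ℕ) (hr : 4 ≤ r) (hn : r + 1 ≤ n) (hnm : n = r + 2 * m)
    (hk7 : 7 ≤ k) (hkr : k ≤ r + 1) (U : SimpleGraph (Fin k))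
    (hC4 : ¬ Contains U C4graph) (hZ4 : ¬ Contains U Z4graph)
    (f : Fin k ↪ Fin (r + 1)) :
    ¬ Contains (laiGraph r m) ((⊤ : SimpleGraph (Fin (r + 1))) \ U.map f) := by
  classical
  rintro ⟨g, hg⟩
  have hm : 1 ≤ m := by omega
  have hnn2 : r + 2 ≤ r + 2*m := by omega
  -- from a non-adjacency in the host graph, extract an edge of U
  have pull : ∀ u v : Fin (r+1), u ≠ v → r - 3 ≤ (g u).val → r - 3 ≤ (g v).val →
      ¬ aadj r (r + 2*m) (g u).val (g v).val →
      ∃ a b, U.Adj a b ∧ f a = u ∧ f b = v := by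
    intro u v huv hbu hbv hna
    have hnadj : ¬ (laiGraph r m).Adj (g u) (g v) := by
      rw [lai_adj_iff r m _ _ hbu hbv]; exact hna
    have hmap : (U.map f).Adj u v := by
      by_contra hU
      refine hnadj (hg ?_)
      rw [SimpleGraph.sdiff_adj, SimpleGraph.top_adj]
      exact ⟨huv, hU⟩
    simpa [SimpleGraph.map_adj] using hmap
  -- a Z4-configuration of non-adjacencies yields a contradiction
  have zcase : ∀ uc uw uy uz : Fin (r+1), uc ≠ uw → uc ≠ uy → uc ≠ uz →
      uw ≠ uy → uw ≠ uz → uy ≠ uz →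
      r-3 ≤ (g uc).val → r-3 ≤ (g uw).val → r-3 ≤ (g uy).val → r-3 ≤ (g uz).val →
      ¬ aadj r (r+2*m) (g uy).val (g uz).val →
      ¬ aadj r (r+2*m) (g uw).val (g uc).val →
      ¬ aadj r (r+2*m) (g uw).val (g uy).val →
      ¬ aadj r (r+2*m) (g uw).val (g uz).val → False := by
    intro uc uw uy uz hcw hcy hcz hwy hwz hyz bc bw byy bz nyz nwc nwy nwz
    obtain ⟨a, b, e1, ha, hb⟩ := pull uy uz hyz byy bz nyz
    obtain ⟨cc, dd, e2, hcc, hdd⟩ := pull uw uc hcw.symm bw bc nwc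
    obtain ⟨c2, a2, e3, hc2, ha2⟩ := pull uw uy hwy bw byy nwy
    obtain ⟨c3, b2, e4, hc3, hb2⟩ := pull uw uz hwz bw bz nwz
    have k1 : c2 = cc := f.injective (hc2.trans hcc.symm)
    have k2 : a2 = a := f.injective (ha2.trans ha.symm)
    have k3 : c3 = cc := f.injective (hc3.trans hcc.symm)
    have k4 : b2 = b := f.injective (hb2.trans hb.symm)
    rw [k1, k2] at e3
    rw [k3, k4] at e4
    refine hZ4 (containsZ4 U a b cc dd ?_ ?_ e1 e3.symm e4.symm e2)
    · intro h; exact hcy (by rw [← hdd, ← h, ha])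
    · intro h; exact hcz (by rw [← hdd, ← h, hb])
  -- a C4-configuration of non-adjacencies yields a contradiction
  have ccase : ∀ p q s t : Fin (r+1), p ≠ q → p ≠ s → p ≠ t →
      q ≠ s → q ≠ t → s ≠ t →
      r-3 ≤ (g p).val → r-3 ≤ (g q).val → r-3 ≤ (g s).val → r-3 ≤ (g t).val →
      ¬ aadj r (r+2*m) (g p).val (g s).val →
      ¬ aadj r (r+2*m) (g p).val (g t).val →
      ¬ aadj r (r+2*m) (g q).val (g s).val →
      ¬ aadj r (r+2*m) (g q).val (g t).val → False := by
    intro p q s t npq nps npt nqs nqt nst bp bq bs bt hps hpt hqs hqt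
    obtain ⟨a, c, e1, ha, hc⟩ := pull p s nps bp bs hps
    obtain ⟨a2, d, e2, ha2, hd⟩ := pull p t npt bp bt hpt
    obtain ⟨b, c2, e3, hb, hc2⟩ := pull q s nqs bq bs hqs
    obtain ⟨b2, d2, e4, hb2, hd2⟩ := pull q t nqt bq bt hqt
    have k1 : a2 = a := f.injective (ha2.trans ha.symm)
    have k2 : c2 = c := f.injective (hc2.trans hc.symm)
    have k3 : b2 = b := f.injective (hb2.trans hb.symm)
    have k4 : d2 = d := f.injective (hd2.trans hd.symm)
    rw [k1] at e2
    rw [k2] at e3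
    rw [k3, k4] at e4
    refine hC4 (containsC4 U a b c d ?_ ?_ e1 e2 e3 e4)
    · intro h; exact npq (by rw [← ha, h, hb])
    · intro h; exact nst (by rw [← hc, h, hd])
  -- find four vertices mapped outside the universal clique
  set S : Finset (Fin (r+1)) := Finset.univ.filter (fun u => r - 3 ≤ (g u).val) with hSdef
  have hcard : 4 ≤ S.card := by
    have hneg : Sᶜ.card ≤ r - 3 := by
      have hsub : ∀ u ∈ Sᶜ, (fun u : Fin (r+1) => (g u).val) u ∈ Finset.range (r-3) := by
        intro u hu
        simp only [hSdef, Finset.mem_compl, Finset.mem_filter, Finset.mem_univ, true_and,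
          not_le] at hu
        simpa using hu
      have hinj : Set.InjOn (fun u : Fin (r+1) => (g u).val) ↑(Sᶜ) :=
        fun u _ v _ h => g.injective (Fin.val_injective h)
      simpa using Finset.card_le_card_of_injOn _ hsub hinj
    have hcompl : Sᶜ.card = (r+1) - S.card := by
      rw [Finset.card_compl]; simp
    have hle : S.card ≤ r + 1 := by
      simpa using Finset.card_le_univ S
    omega
  obtain ⟨u1, hu1⟩ := Finset.card_pos.mp (show 0 < S.card by omega)
  have hc2 : 0 < (S.erase u1).card := by rw [Finset.card_erase_of_mem hu1]; omega
  obtain ⟨u2, hu2⟩ := Finset.card_pos.mp hc2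
  have hc3 : 0 < ((S.erase u1).erase u2).card := by
    rw [Finset.card_erase_of_mem hu2, Finset.card_erase_of_mem hu1]; omega
  obtain ⟨u3, hu3⟩ := Finset.card_pos.mp hc3
  have hc4 : 0 < (((S.erase u1).erase u2).erase u3).card := by
    rw [Finset.card_erase_of_mem hu3, Finset.card_erase_of_mem hu2, Finset.card_erase_of_mem hu1]
    omega
  obtain ⟨u4, hu4⟩ := Finset.card_pos.mp hc4
  simp only [Finset.mem_erase] at hu2 hu3 hu4
  obtain ⟨n21, hu2⟩ := hu2
  obtain ⟨n32, n31, hu3⟩ := hu3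
  obtain ⟨n43, n42, n41, hu4⟩ := hu4
  have ne12 : u1 ≠ u2 := n21.symm
  have ne13 : u1 ≠ u3 := n31.symm
  have ne14 : u1 ≠ u4 := n41.symm
  have ne23 : u2 ≠ u3 := n32.symm
  have ne24 : u2 ≠ u4 := n42.symm
  have ne34 : u3 ≠ u4 := n43.symm
  simp only [hSdef, Finset.mem_filter, Finset.mem_univ, true_and] at hu1 hu2 hu3 hu4
  have b1 : r - 3 ≤ (g u1).val := hu1
  have b2 : r - 3 ≤ (g u2).val := hu2
  have b3 : r - 3 ≤ (g u3).val := hu3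
  have b4 : r - 3 ≤ (g u4).val := hu4
  have l1 := (g u1).isLt
  have l2 := (g u2).isLt
  have l3 := (g u3).isLt
  have l4 := (g u4).isLt
  have dvv : ∀ x y : Fin (r+1), x ≠ y → (g x).val ≠ (g y).val :=
    fun x y hxy h => hxy (g.injective (Fin.val_injective h))
  -- dispatch the centerKey/nocenterKey conclusions to zcase/ccase
  have dispatch : ∀ w1 w2 w3 w4 : Fin (r+1), w1 ≠ w2 → w1 ≠ w3 → w1 ≠ w4 →
      w2 ≠ w3 → w2 ≠ w4 → w3 ≠ w4 →
      r-3 ≤ (g w1).val → r-3 ≤ (g w2).val → r-3 ≤ (g w3).val → r-3 ≤ (g w4).val →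
      ((Zc r (r+2*m) (g w1).val (g w4).val (g w2).val (g w3).val ∨
        Zc r (r+2*m) (g w1).val (g w3).val (g w2).val (g w4).val ∨
        Zc r (r+2*m) (g w1).val (g w2).val (g w3).val (g w4).val) ∨
       (Cc r (r+2*m) (g w1).val (g w2).val (g w3).val (g w4).val ∨
        Cc r (r+2*m) (g w1).val (g w3).val (g w2).val (g w4).val ∨
        Cc r (r+2*m) (g w1).val (g w4).val (g w2).val (g w3).val)) → False := by
    intro w1 w2 w3 w4 e12 e13 e14 e23 e24 e34 B1 B2 B3 B4 hK
    simp only [Zc, Cc] at hK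
    rcases hK with ((⟨p1,p2,p3,p4⟩|⟨p1,p2,p3,p4⟩|⟨p1,p2,p3,p4⟩)|(⟨p1,p2,p3,p4⟩|⟨p1,p2,p3,p4⟩|⟨p1,p2,p3,p4⟩))
    · exact zcase w1 w4 w2 w3 e14 e12 e13 e24.symm e34.symm e23 B1 B4 B2 B3 p1 p2 p3 p4
    · exact zcase w1 w3 w2 w4 e13 e12 e14 e23.symm e34 e24 B1 B3 B2 B4 p1 p2 p3 p4
    · exact zcase w1 w2 w3 w4 e12 e13 e14 e23 e24 e34 B1 B2 B3 B4 p1 p2 p3 p4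
    · exact ccase w1 w2 w3 w4 e12 e13 e14 e23 e24 e34 B1 B2 B3 B4 p1 p2 p3 p4
    · exact ccase w1 w3 w2 w4 e13 e12 e14 e23.symm e34 e24 B1 B3 B2 B4 p1 p2 p3 p4
    · exact ccase w1 w4 w2 w3 e14 e12 e13 e24.symm e34.symm e23 B1 B4 B2 B3 p1 p2 p3 p4
  by_cases cc1 : (g u1).val = r + 2*m - 2
  · exact dispatch u1 u2 u3 u4 ne12 ne13 ne14 ne23 ne24 ne34 b1 b2 b3 b4
      (centerKey r (r+2*m) _ _ _ _ hr hnn2 b1 b2 b3 b4 l1 l2 l3 l4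
        (dvv u1 u2 ne12) (dvv u1 u3 ne13) (dvv u1 u4 ne14)
        (dvv u2 u3 ne23) (dvv u2 u4 ne24) (dvv u3 u4 ne34) cc1)
  by_cases cc2 : (g u2).val = r + 2*m - 2
  · exact dispatch u2 u1 u3 u4 ne12.symm ne23 ne24 ne13 ne14 ne34 b2 b1 b3 b4
      (centerKey r (r+2*m) _ _ _ _ hr hnn2 b2 b1 b3 b4 l2 l1 l3 l4
        (dvv u2 u1 ne12.symm) (dvv u2 u3 ne23) (dvv u2 u4 ne24)
        (dvv u1 u3 ne13) (dvv u1 u4 ne14) (dvv u3 u4 ne34) cc2)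
  by_cases cc3 : (g u3).val = r + 2*m - 2
  · exact dispatch u3 u1 u2 u4 ne13.symm ne23.symm ne34 ne12 ne14 ne24 b3 b1 b2 b4
      (centerKey r (r+2*m) _ _ _ _ hr hnn2 b3 b1 b2 b4 l3 l1 l2 l4
        (dvv u3 u1 ne13.symm) (dvv u3 u2 ne23.symm) (dvv u3 u4 ne34)
        (dvv u1 u2 ne12) (dvv u1 u4 ne14) (dvv u2 u4 ne24) cc3)
  by_cases cc4 : (g u4).val = r + 2*m - 2
  · exact dispatch u4 u1 u2 u3 ne14.symm ne24.symm ne34.symm ne12 ne13 ne23 b4 b1 b2 b3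
      (centerKey r (r+2*m) _ _ _ _ hr hnn2 b4 b1 b2 b3 l4 l1 l2 l3
        (dvv u4 u1 ne14.symm) (dvv u4 u2 ne24.symm) (dvv u4 u3 ne34.symm)
        (dvv u1 u2 ne12) (dvv u1 u3 ne13) (dvv u2 u3 ne23) cc4)
  · exact dispatch u1 u2 u3 u4 ne12 ne13 ne14 ne23 ne24 ne34 b1 b2 b3 b4
      (Or.inr (nocenterKey r (r+2*m) _ _ _ _ hr hnn2 b1 b2 b3 b4 l1 l2 l3 l4
        (dvv u1 u2 ne12) (dvv u1 u3 ne13) (dvv u1 u4 ne14)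
        (dvv u2 u3 ne23) (dvv u2 u4 ne24) (dvv u3 u4 ne34) cc1 cc2 cc3 cc4))
end

section
/- If r ≥ 4, n ≥ r+1, and n - r is odd, then σ(K_{r+1} - U, n) ≥ (r-1)(2n-r) - 3(n-r) - 1, where U is a graph on k vertices (7 ≤ k ≤ r+1) containing no 4-cycle and no Z_4 = K_4 - P_2. The witness is the graphic sequence of K_{r-3} + ((n-r-1)/2 · K_2 ∪ P_2 ∪ K_1). -/
open SimpleGraph Finset

/- ### Auxiliary material -/

lemma card_val_lt (n k : ℕ) (hk : k ≤ n) : (univ.filter (fun i : Fin n => i.val < k)).card = k := by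
  rcases Nat.lt_or_ge k n with h | h
  · have : (univ.filter (fun i : Fin n => i.val < k)) = Finset.Iio ⟨k, h⟩ := by
      ext i; simp [Fin.lt_def]
    rw [this, Fin.card_Iio]
  · have h1 : (univ.filter (fun i : Fin n => i.val < k)) = univ := by
      ext i; simpa using lt_of_lt_of_le i.isLt h
    rw [h1, Finset.card_univ, Fintype.card_fin]
    omega

lemma deg_eq_card {n : ℕ} (G : SimpleGraph (Fin n)) (v : Fin n) (T : Finset (Fin n))
    (h : ∀ w, G.Adj v w ↔ w ∈ T) : deg G v = T.card := by
  have hs : {w | G.Adj v w} = ↑T := by ext w; simp [h]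
  rw [deg, hs, Set.ncard_coe_finset]

def loc (r n a b : ℕ) : Prop :=
  (a = r - 3 ∧ (b = r - 2 ∨ b = r - 1)) ∨
  (r ≤ a ∧ (a - r) % 2 = 0 ∧ b = a + 1 ∧ b ≤ n - 2)

def G0 (r n : ℕ) : SimpleGraph (Fin n) where
  Adj i j := i ≠ j ∧ (i.val < r - 3 ∨ j.val < r - 3 ∨ loc r n i.val j.val ∨ loc r n j.val i.val)
  symm := by
    refine ⟨fun i j h => ?_⟩
    exact ⟨h.1.symm, by tauto⟩
  loopless := by refine ⟨fun i h => ?_⟩; exact h.1 rfl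

def dseq (r n : ℕ) : Fin n → ℕ := fun i =>
  if i.val < r - 3 then n - 1 else if i.val = r - 3 then r - 1
  else if i.val ≤ n - 2 then r - 2 else r - 3

lemma deg_G0 (r n : ℕ) (hr : 4 ≤ r) (hn : r + 1 ≤ n) (hodd : (n - r) % 2 = 1) (v : Fin n) :
    deg (G0 r n) v = dseq r n v := by
  have hv := v.isLt
  by_cases h1 : v.val < r - 3
  · -- universal vertex
    rw [deg_eq_card _ v (univ.erase v) ?_]
    · rw [Finset.card_erase_of_mem (Finset.mem_univ v), Finset.card_univ, Fintype.card_fin]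
      simp only [dseq, if_pos h1]
    · intro w
      simp only [Finset.mem_erase, Finset.mem_univ, and_true, G0, loc, Fin.ext_iff, ne_eq]
      constructor
      · rintro ⟨hne, -⟩; exact fun hh => hne (by omega)
      · intro hne; exact ⟨fun hh => hne (by omega), Or.inl h1⟩
  · by_cases h2 : v.val = r - 3
    · -- middle vertex
      rw [deg_eq_card _ v ((Finset.Iio (⟨r, by omega⟩ : Fin n)).erase v) ?_]
      · rw [Finset.card_erase_of_mem (by simp [Finset.mem_Iio, Fin.lt_def]; omega), Fin.card_Iio]
        simp only [dseq, if_neg h1, if_pos h2]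
      · intro w
        simp only [Finset.mem_erase, Finset.mem_Iio, G0, loc, Fin.ext_iff, ne_eq, Fin.lt_def]
        omega
    · by_cases h3 : v.val ≤ r - 1
      · -- end of the path : v.val = r-2 or r-1
        rw [deg_eq_card _ v (Finset.Iio (⟨r - 2, by omega⟩ : Fin n)) ?_]
        · rw [Fin.card_Iio]
          simp only [dseq, if_neg h1, if_neg h2, if_pos (by omega : v.val ≤ n - 2)]
        · intro w
          simp only [Finset.mem_Iio, G0, loc, Fin.ext_iff, ne_eq, Fin.lt_def]
          omega
      · by_cases h4 : v.val ≤ n - 2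
        · -- matching vertex
          rw [deg_eq_card _ v (insert
              (⟨if (v.val - r) % 2 = 0 then v.val + 1 else v.val - 1, by
                 split_ifs <;> omega⟩ : Fin n)
              (univ.filter (fun w : Fin n => w.val < r - 3))) ?_]
          · rw [Finset.card_insert_of_notMem (by
              simp only [Finset.mem_filter, Finset.mem_univ, true_and]
              split_ifs <;> simp <;> omega)]
            rw [card_val_lt n (r-3) (by omega)]
            simp only [dseq, if_neg h1, if_neg h2, if_pos h4]
            omega
          · intro w
            simp only [Finset.mem_insert, Finset.mem_filter, Finset.mem_univ, true_and, G0, loc,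
              Fin.ext_iff, ne_eq]
            split_ifs with hpar
            · omega
            · omega
        · -- isolated vertex
          rw [deg_eq_card _ v (univ.filter (fun w : Fin n => w.val < r - 3)) ?_]
          · rw [card_val_lt n (r-3) (by omega)]
            simp only [dseq, if_neg h1, if_neg h2, if_neg h4]
          · intro w
            simp only [Finset.mem_filter, Finset.mem_univ, true_and, G0, loc, Fin.ext_iff, ne_eq]
            omega

lemma dseq_antitone (r n : ℕ) (hr : 4 ≤ r) (hn : r + 1 ≤ n) : Antitone (dseq r n) := by
  intro i j hij
  simp only [dseq]
  have : i.val ≤ j.val := hij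
  split_ifs <;> omega

lemma sum_dseq (r n : ℕ) (hr : 4 ≤ r) (hn : r + 1 ≤ n) :
    ∑ i, dseq r n i = (r-3)*(n-1) + (r-1) + (n-r+1)*(r-2) + (r-3) := by
  have h0 : ∑ i, dseq r n i = ∑ j ∈ Finset.range n, (if j < r - 3 then n - 1
      else if j = r - 3 then r - 1 else if j ≤ n - 2 then r - 2 else r - 3) :=
    Fin.sum_univ_eq_sum_range (fun j => if j < r - 3 then n - 1
      else if j = r - 3 then r - 1 else if j ≤ n - 2 then r - 2 else r - 3) n
  rw [h0, Finset.range_eq_Ico,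
    ← Finset.sum_Ico_consecutive _ (by omega : 0 ≤ r - 3) (by omega : r - 3 ≤ n),
    ← Finset.sum_Ico_consecutive _ (by omega : r - 3 ≤ r - 2) (by omega : r - 2 ≤ n),
    ← Finset.sum_Ico_consecutive _ (by omega : r - 2 ≤ n - 1) (by omega : n - 1 ≤ n)]
  have e1 : ∑ j ∈ Finset.Ico 0 (r-3), (if j < r - 3 then n - 1
      else if j = r - 3 then r - 1 else if j ≤ n - 2 then r - 2 else r - 3) = (r-3)*(n-1) := by
    have hc : ∀ j ∈ Finset.Ico 0 (r-3), (if j < r - 3 then n - 1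
        else if j = r - 3 then r - 1 else if j ≤ n - 2 then r - 2 else r - 3) = n - 1 := by
      intro j hj; simp only [Finset.mem_Ico] at hj; rw [if_pos (by omega)]
    rw [Finset.sum_congr rfl hc, Finset.sum_const, Nat.card_Ico, smul_eq_mul,
      Nat.sub_zero]
  have e2 : ∑ j ∈ Finset.Ico (r-3) (r-2), (if j < r - 3 then n - 1
      else if j = r - 3 then r - 1 else if j ≤ n - 2 then r - 2 else r - 3) = r - 1 := by
    have hc : ∀ j ∈ Finset.Ico (r-3) (r-2), (if j < r - 3 then n - 1
        else if j = r - 3 then r - 1 else if j ≤ n - 2 then r - 2 else r - 3) = r - 1 := by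
      intro j hj; simp only [Finset.mem_Ico] at hj
      rw [if_neg (by omega), if_pos (by omega)]
    rw [Finset.sum_congr rfl hc, Finset.sum_const, Nat.card_Ico, smul_eq_mul,
      (by omega : r - 2 - (r - 3) = 1), one_mul]
  have e3 : ∑ j ∈ Finset.Ico (r-2) (n-1), (if j < r - 3 then n - 1
      else if j = r - 3 then r - 1 else if j ≤ n - 2 then r - 2 else r - 3) = (n-r+1)*(r-2) := by
    have hc : ∀ j ∈ Finset.Ico (r-2) (n-1), (if j < r - 3 then n - 1
        else if j = r - 3 then r - 1 else if j ≤ n - 2 then r - 2 else r - 3) = r - 2 := by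
      intro j hj; simp only [Finset.mem_Ico] at hj
      rw [if_neg (by omega), if_neg (by omega), if_pos (by omega)]
    rw [Finset.sum_congr rfl hc, Finset.sum_const, Nat.card_Ico, smul_eq_mul,
      (by omega : n - 1 - (r - 2) = n - r + 1)]
  have e4 : ∑ j ∈ Finset.Ico (n-1) n, (if j < r - 3 then n - 1
      else if j = r - 3 then r - 1 else if j ≤ n - 2 then r - 2 else r - 3) = r - 3 := by
    have hc : ∀ j ∈ Finset.Ico (n-1) n, (if j < r - 3 then n - 1
        else if j = r - 3 then r - 1 else if j ≤ n - 2 then r - 2 else r - 3) = r - 3 := by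
      intro j hj; simp only [Finset.mem_Ico] at hj
      rw [if_neg (by omega), if_neg (by omega), if_neg (by omega)]
    rw [Finset.sum_congr rfl hc, Finset.sum_const, Nat.card_Ico, smul_eq_mul,
      (by omega : n - (n - 1) = 1), one_mul]
  rw [e1, e2, e3, e4]
  ring

def adj6 (e : Fin 6 → Bool) (i j : Fin 4) : Bool :=
  match i.val, j.val with
  | 0, 1 => e 0 | 1, 0 => e 0
  | 0, 2 => e 1 | 2, 0 => e 1
  | 0, 3 => e 2 | 3, 0 => e 2
  | 1, 2 => e 3 | 2, 1 => e 3
  | 1, 3 => e 4 | 3, 1 => e 4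
  | 2, 3 => e 5 | 3, 2 => e 5
  | _, _ => false

set_option maxHeartbeats 4000000 in
set_option maxRecDepth 100000 in
set_option synthInstance.maxHeartbeats 2000000 in
set_option synthInstance.maxSize 2000 in
lemma helper : ∀ (e : Fin 6 → Bool) (s : Fin 4),
  (∀ i j k : Fin 4, i ≠ s → i ≠ j → i ≠ k → j ≠ k → (adj6 e i j || adj6 e i k) = true) →
  (∃ j, j ≠ s ∧ adj6 e s j = true) →
  ∃ f : Fin 4 → Fin 4, (∀ a b : Fin 4, f a = f b → a = b) ∧
    ((adj6 e (f 0) (f 1) && adj6 e (f 1) (f 2) && adj6 e (f 2) (f 3) && adj6 e (f 0) (f 3)) = true ∨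
     (adj6 e (f 0) (f 2) && adj6 e (f 0) (f 3) && adj6 e (f 1) (f 3) && adj6 e (f 2) (f 3)) = true) := by
  decide

lemma C4adj (u v : Fin 4) (h : C4graph.Adj u v) :
    (u=0∧v=1)∨(u=1∧v=0)∨(u=1∧v=2)∨(u=2∧v=1)∨(u=2∧v=3)∨(u=3∧v=2)∨(u=0∧v=3)∨(u=3∧v=0) := by
  rw [C4graph, SimpleGraph.fromEdgeSet_adj] at h
  obtain ⟨hm, hne⟩ := h
  simp only [Set.mem_insert_iff, Set.mem_singleton_iff, Sym2.eq, Sym2.rel_iff', Prod.mk.injEq,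
    Prod.swap_prod_mk] at hm
  tauto

lemma Z4adj (u v : Fin 4) (h : Z4graph.Adj u v) :
    (u=0∧v=2)∨(u=2∧v=0)∨(u=0∧v=3)∨(u=3∧v=0)∨(u=1∧v=3)∨(u=3∧v=1)∨(u=2∧v=3)∨(u=3∧v=2) := by
  rw [Z4graph, SimpleGraph.fromEdgeSet_adj] at h
  obtain ⟨hm, hne⟩ := h
  simp only [Set.mem_insert_iff, Set.mem_singleton_iff, Sym2.eq, Sym2.rel_iff', Prod.mk.injEq,
    Prod.swap_prod_mk] at hm
  tauto

open Classical in
lemma helperU {k : ℕ} (U : SimpleGraph (Fin k)) (p : Fin 4 → Fin k)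
    (hpinj : ∀ i j : Fin 4, i ≠ j → p i ≠ p j) (s : Fin 4)
    (h1 : ∀ i j l : Fin 4, i ≠ s → i ≠ j → i ≠ l → j ≠ l → (U.Adj (p i) (p j) ∨ U.Adj (p i) (p l)))
    (h2 : ∃ j, j ≠ s ∧ U.Adj (p s) (p j)) :
    Contains U C4graph ∨ Contains U Z4graph := by
  set e : Fin 6 → Bool := fun idx =>
    if idx = 0 then decide (U.Adj (p 0) (p 1)) else
    if idx = 1 then decide (U.Adj (p 0) (p 2)) else
    if idx = 2 then decide (U.Adj (p 0) (p 3)) else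
    if idx = 3 then decide (U.Adj (p 1) (p 2)) else
    if idx = 4 then decide (U.Adj (p 1) (p 3)) else
    decide (U.Adj (p 2) (p 3)) with he_def
  have he : ∀ i j : Fin 4, adj6 e i j = true ↔ (i ≠ j ∧ U.Adj (p i) (p j)) := by
    intro i j
    fin_cases i <;> fin_cases j <;>
      simp [adj6, he_def] <;>
      exact U.adj_comm _ _
  obtain ⟨g, hginj, hpat⟩ := helper e s
    (by
      intro i j l hi hij hil hjl
      rcases h1 i j l hi hij hil hjl with h | h
      · simp [Bool.or_eq_true, (he i j).mpr ⟨hij, h⟩]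
      · simp [Bool.or_eq_true, (he i l).mpr ⟨hil, h⟩])
    (by
      obtain ⟨j, hj, hadj⟩ := h2
      exact ⟨j, hj, (he s j).mpr ⟨Ne.symm hj, hadj⟩⟩)
  have hginj' : Function.Injective (fun i => p (g i)) := by
    intro a b hab
    by_contra hne
    exact hpinj (g a) (g b) (fun hg => hne (hginj a b hg)) hab
  rcases hpat with hc | hz
  · refine Or.inl ⟨⟨fun i => p (g i), hginj'⟩, ?_⟩
    intro u v huv
    simp only [Bool.and_eq_true] at hc
    obtain ⟨⟨⟨h01, h12⟩, h23⟩, h03⟩ := hc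
    have e01 := ((he _ _).mp h01).2
    have e12 := ((he _ _).mp h12).2
    have e23 := ((he _ _).mp h23).2
    have e03 := ((he _ _).mp h03).2
    rcases C4adj u v huv with ⟨rfl,rfl⟩|⟨rfl,rfl⟩|⟨rfl,rfl⟩|⟨rfl,rfl⟩|⟨rfl,rfl⟩|⟨rfl,rfl⟩|⟨rfl,rfl⟩|⟨rfl,rfl⟩ <;>
      first
        | exact e01 | exact e01.symm | exact e12 | exact e12.symm
        | exact e23 | exact e23.symm | exact e03 | exact e03.symm
  · refine Or.inr ⟨⟨fun i => p (g i), hginj'⟩, ?_⟩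
    intro u v huv
    simp only [Bool.and_eq_true] at hz
    obtain ⟨⟨⟨h02, h03⟩, h13⟩, h23⟩ := hz
    have e02 := ((he _ _).mp h02).2
    have e03 := ((he _ _).mp h03).2
    have e13 := ((he _ _).mp h13).2
    have e23 := ((he _ _).mp h23).2
    rcases Z4adj u v huv with ⟨rfl,rfl⟩|⟨rfl,rfl⟩|⟨rfl,rfl⟩|⟨rfl,rfl⟩|⟨rfl,rfl⟩|⟨rfl,rfl⟩|⟨rfl,rfl⟩|⟨rfl,rfl⟩ <;>
      first
        | exact e02 | exact e02.symm | exact e03 | exact e03.symm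
        | exact e13 | exact e13.symm | exact e23 | exact e23.symm

set_option maxHeartbeats 1600000 in
lemma no_contain (r n k : ℕ) (hr : 4 ≤ r) (hn : r + 1 ≤ n)
    (U : SimpleGraph (Fin k)) (f : Fin k ↪ Fin (r + 1))
    (hC4 : ¬ Contains U C4graph) (hZ4 : ¬ Contains U Z4graph)
    (G : SimpleGraph (Fin n)) (hdeg : ∀ i, deg G i = dseq r n i)
    (hcont : Contains G ((⊤ : SimpleGraph (Fin (r + 1))) \ U.map f)) : False := by
  classical
  obtain ⟨φ, hφ⟩ := hcont
  have hH : ∀ a b : Fin (r+1), a ≠ b → (∀ u v : Fin k, f u = a → f v = b → ¬ U.Adj u v) →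
      G.Adj (φ a) (φ b) := by
    intro a b hab hU
    apply hφ
    rw [SimpleGraph.sdiff_adj, SimpleGraph.top_adj]
    refine ⟨hab, ?_⟩
    rintro ⟨-, u, v, huv, hu, hv⟩
    exact hU u v hu hv huv
  have huniv : ∀ v w : Fin n, v.val < r - 3 → w ≠ v → G.Adj v w := by
    intro v w hv hw
    have h1 : {x : Fin n | G.Adj v x} ⊆ {x : Fin n | x ≠ v} :=
      fun x hx => (G.ne_of_adj hx).symm
    have h2 : ({x : Fin n | x ≠ v}).ncard = n - 1 := by
      have hcv : ({x : Fin n | x ≠ v}) = {v}ᶜ := by ext x; simp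
      rw [hcv, Set.ncard_eq_toFinset_card', Set.toFinset_compl, Finset.card_compl]
      simp
    have h3 : ({x : Fin n | G.Adj v x}).ncard = n - 1 := by
      have h := hdeg v
      simp only [deg] at h
      rw [h]
      simp only [dseq, if_pos hv]
    have h4 := Set.eq_of_subset_of_ncard_le h1 (by rw [h2, h3]) (Set.toFinite _)
    have : w ∈ {x : Fin n | G.Adj v x} := by rw [h4]; exact hw
    exact this
  have hNBcard : ∀ u : Fin n, ¬ u.val < r - 3 →
      ({w : Fin n | G.Adj u w ∧ ¬ (w.val < r - 3)}).ncard = dseq r n u - (r - 3) := by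
    intro u hu
    have hBsub : {w : Fin n | w.val < r - 3} ⊆ {w : Fin n | G.Adj u w} := by
      intro w hw
      have : u ≠ w := fun h => hu (h ▸ hw)
      exact (huniv w u hw this).symm
    have hsplit : {w : Fin n | G.Adj u w ∧ ¬ (w.val < r - 3)}
        = {w : Fin n | G.Adj u w} \ {w : Fin n | w.val < r - 3} := by
      ext w; simp only [Set.mem_setOf_eq, Set.mem_diff]
    rw [hsplit, Set.ncard_diff hBsub (Set.toFinite _)]
    congr 1
    · have h := hdeg u
      simp only [deg] at h
      exact h
    · have hBf : ({w : Fin n | w.val < r - 3})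
          = ↑(univ.filter (fun w : Fin n => w.val < r - 3)) := by ext w; simp
      rw [hBf, Set.ncard_coe_finset, card_val_lt n (r-3) (by omega)]
  have hNB2 : ∀ u : Fin n, ¬ u.val < r - 3 →
      ({w : Fin n | G.Adj u w ∧ ¬ (w.val < r - 3)}).ncard ≤ 2 := by
    intro u hu
    rw [hNBcard u hu]
    simp only [dseq]
    split_ifs <;> omega
  have hNB1 : ∀ u : Fin n, ¬ u.val < r - 3 → u.val ≠ r - 3 →
      ({w : Fin n | G.Adj u w ∧ ¬ (w.val < r - 3)}).ncard ≤ 1 := by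
    intro u hu hu2
    rw [hNBcard u hu]
    simp only [dseq]
    split_ifs <;> omega
  -- find four vertices with non-big images
  have hbig : (univ.filter (fun a : Fin (r+1) => (φ a).val < r - 3)).card ≤ r - 3 := by
    have h := Finset.card_le_card_of_injOn (f := fun a => φ a)
      (s := univ.filter (fun a : Fin (r+1) => (φ a).val < r - 3))
      (t := univ.filter (fun w : Fin n => w.val < r - 3))
      (by intro a ha; simp only [Finset.coe_filter, Set.mem_setOf_eq, Finset.mem_filter, Finset.mem_univ, true_and] at ha ⊢; exact ha)
      (φ.injective.injOn)
    rwa [card_val_lt n (r-3) (by omega)] at h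
  have hT4 : 4 ≤ (univ.filter (fun a : Fin (r+1) => ¬ (φ a).val < r - 3)).card := by
    have hsum := Finset.card_filter_add_card_filter_not
      (s := (univ : Finset (Fin (r+1)))) (p := fun a => (φ a).val < r - 3)
    rw [Finset.card_univ, Fintype.card_fin] at hsum
    omega
  obtain ⟨t, hts, htc⟩ := Finset.exists_subset_card_eq hT4
  obtain ⟨a0, ha0⟩ := Finset.card_pos.mp (by omega : 0 < t.card)
  have htc3 : (t.erase a0).card = 3 := by rw [Finset.card_erase_of_mem ha0, htc]
  obtain ⟨a1, a2, a3, h12, h13, h23, herase⟩ := Finset.card_eq_three.mp htc3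
  have ha1e : a1 ∈ t.erase a0 := by rw [herase]; simp
  have ha2e : a2 ∈ t.erase a0 := by rw [herase]; simp
  have ha3e : a3 ∈ t.erase a0 := by rw [herase]; simp
  have h01 : a0 ≠ a1 := (Finset.ne_of_mem_erase ha1e).symm
  have h02 : a0 ≠ a2 := (Finset.ne_of_mem_erase ha2e).symm
  have h03 : a0 ≠ a3 := (Finset.ne_of_mem_erase ha3e).symm
  have ha1 : a1 ∈ t := Finset.mem_of_mem_erase ha1e
  have ha2 : a2 ∈ t := Finset.mem_of_mem_erase ha2e
  have ha3 : a3 ∈ t := Finset.mem_of_mem_erase ha3e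
  set A : Fin 4 → Fin (r+1) := ![a0, a1, a2, a3] with hA_def
  have h01' := h01.symm; have h02' := h02.symm; have h03' := h03.symm
  have h12' := h12.symm; have h13' := h13.symm; have h23' := h23.symm
  have hAne : ∀ i j : Fin 4, i ≠ j → A i ≠ A j := by
    intro i j hij
    fin_cases i <;> fin_cases j <;>
      simp only [hA_def, Matrix.cons_val_zero, Matrix.cons_val_one, Matrix.head_cons,
        Matrix.cons_val_two, Matrix.tail_cons, Matrix.cons_val_three, Matrix.head_fin_const,
        Fin.isValue] <;>
      first
        | exact absurd rfl hij
        | assumption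
        | exact h01.symm | exact h02.symm | exact h03.symm
        | exact h12.symm | exact h13.symm | exact h23.symm
  set X : Fin 4 → Fin n := fun i => φ (A i) with hX_def
  have hXne : ∀ i j : Fin 4, i ≠ j → X i ≠ X j := by
    intro i j hij h
    exact hAne i j hij (φ.injective h)
  have hXinj : ∀ i j : Fin 4, X i = X j → i = j := by
    intro i j h
    by_contra hne
    exact hXne i j hne h
  have hAmem : ∀ i : Fin 4, ¬ (X i).val < r - 3 := by
    intro i
    have hmem : A i ∈ t := by
      fin_cases i <;>
        simp only [hA_def, Matrix.cons_val_zero, Matrix.cons_val_one, Matrix.head_cons,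
          Matrix.cons_val_two, Matrix.tail_cons, Matrix.cons_val_three, Matrix.head_fin_const,
          Fin.isValue] <;>
        assumption
    have := hts hmem
    simp only [Finset.mem_filter, Finset.mem_univ, true_and] at this
    exact this
  have hothers : ∀ s : Fin 4, ∃ j1 j2 j3 : Fin 4,
      s ≠ j1 ∧ s ≠ j2 ∧ s ≠ j3 ∧ j1 ≠ j2 ∧ j1 ≠ j3 ∧ j2 ≠ j3 := by decide
  have key3 : ∀ i j1 j2 j3 : Fin 4, i ≠ j1 → i ≠ j2 → i ≠ j3 → j1 ≠ j2 → j1 ≠ j3 → j2 ≠ j3 →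
      G.Adj (X i) (X j1) → G.Adj (X i) (X j2) → G.Adj (X i) (X j3) → False := by
    intro i j1 j2 j3 hi1 hi2 hi3 hj12 hj13 hj23 had1 had2 had3
    have hsub : ({X j1, X j2, X j3} : Set (Fin n)) ⊆
        {w : Fin n | G.Adj (X i) w ∧ ¬ (w.val < r - 3)} := by
      intro x hx
      simp only [Set.mem_insert_iff, Set.mem_singleton_iff] at hx
      rcases hx with rfl | rfl | rfl
      · exact ⟨had1, hAmem j1⟩
      · exact ⟨had2, hAmem j2⟩
      · exact ⟨had3, hAmem j3⟩
    have hc3 : ({X j1, X j2, X j3} : Set (Fin n)).ncard = 3 := by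
      rw [Set.ncard_insert_of_notMem (by simp [hXne j1 j2 hj12, hXne j1 j3 hj13]),
        Set.ncard_pair (hXne j2 j3 hj23)]
    have hle := Set.ncard_le_ncard hsub (Set.toFinite _)
    have hb := hNB2 (X i) (hAmem i)
    omega
  have hrange : ∀ i : Fin 4, ∃ u : Fin k, f u = A i := by
    intro i
    by_contra hno
    push_neg at hno
    have hadj : ∀ j : Fin 4, j ≠ i → G.Adj (X i) (X j) := by
      intro j hj
      exact hH (A i) (A j) (hAne i j (Ne.symm hj)) (fun u v hu hv => absurd hu (hno u))
    obtain ⟨j1, j2, j3, hh1, hh2, hh3, hh4, hh5, hh6⟩ := hothers i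
    exact key3 i j1 j2 j3 hh1 hh2 hh3 hh4 hh5 hh6
      (hadj j1 (Ne.symm hh1)) (hadj j2 (Ne.symm hh2)) (hadj j3 (Ne.symm hh3))
  choose p hp using hrange
  have hpne : ∀ i j : Fin 4, i ≠ j → p i ≠ p j := by
    intro i j hij h
    exact hAne i j hij (by rw [← hp i, ← hp j, h])
  obtain ⟨s, hsprop⟩ : ∃ s : Fin 4, ∀ i : Fin 4, i ≠ s → (X i).val ≠ r - 3 := by
    by_cases c0 : (X 0).val = r - 3
    · refine ⟨0, fun i hi hival => hi (hXinj i 0 (Fin.ext (by rw [hival, c0])))⟩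
    · by_cases c1 : (X 1).val = r - 3
      · refine ⟨1, fun i hi hival => hi (hXinj i 1 (Fin.ext (by rw [hival, c1])))⟩
      · by_cases c2 : (X 2).val = r - 3
        · refine ⟨2, fun i hi hival => hi (hXinj i 2 (Fin.ext (by rw [hival, c2])))⟩
        · refine ⟨3, fun i hi => ?_⟩
          fin_cases i
          · exact c0
          · exact c1
          · exact c2
          · exact absurd rfl hi
  have hUadj : ∀ i j : Fin 4, i ≠ j → ¬ U.Adj (p i) (p j) → G.Adj (X i) (X j) := by
    intro i j hij hnadj
    refine hH (A i) (A j) (hAne i j hij) (fun u v hu hv => ?_)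
    have hu' : u = p i := f.injective (by rw [hu, hp i])
    have hv' : v = p j := f.injective (by rw [hv, hp j])
    rw [hu', hv']
    exact hnadj
  have h1 : ∀ i j l : Fin 4, i ≠ s → i ≠ j → i ≠ l → j ≠ l →
      (U.Adj (p i) (p j) ∨ U.Adj (p i) (p l)) := by
    intro i j l his hij hil hjl
    by_contra hno
    push_neg at hno
    obtain ⟨hnj, hnl⟩ := hno
    have hadjj := hUadj i j hij hnj
    have hadjl := hUadj i l hil hnl
    have hsub : ({X j, X l} : Set (Fin n)) ⊆
        {w : Fin n | G.Adj (X i) w ∧ ¬ (w.val < r - 3)} := by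
      intro x hx
      simp only [Set.mem_insert_iff, Set.mem_singleton_iff] at hx
      rcases hx with rfl | rfl
      · exact ⟨hadjj, hAmem j⟩
      · exact ⟨hadjl, hAmem l⟩
    have hc2 : ({X j, X l} : Set (Fin n)).ncard = 2 := Set.ncard_pair (hXne j l hjl)
    have hle := Set.ncard_le_ncard hsub (Set.toFinite _)
    have hb := hNB1 (X i) (hAmem i) (hsprop i his)
    omega
  have h2 : ∃ j, j ≠ s ∧ U.Adj (p s) (p j) := by
    by_contra hno
    push_neg at hno
    have hadj : ∀ j : Fin 4, j ≠ s → G.Adj (X s) (X j) := by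
      intro j hj
      exact hUadj s j (Ne.symm hj) (hno j hj)
    obtain ⟨j1, j2, j3, hh1, hh2, hh3, hh4, hh5, hh6⟩ := hothers s
    exact key3 s j1 j2 j3 hh1 hh2 hh3 hh4 hh5 hh6
      (hadj j1 (Ne.symm hh1)) (hadj j2 (Ne.symm hh2)) (hadj j3 (Ne.symm hh3))
  rcases helperU U p hpne s h1 h2 with hc | hz
  · exact hC4 hc
  · exact hZ4 hz

lemma sigma_set_nonempty (n : ℕ) {β : Type*} (H : SimpleGraph β) :
    {l : ℕ | Even l ∧ ∀ d : Fin n → ℕ, Antitone d → IsGraphic d →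
      l ≤ ∑ i, d i → PotentiallyGraphic H d}.Nonempty := by
  refine ⟨n*n + n*n + 2, ⟨n*n + 1, by ring⟩, ?_⟩
  intro d hant hg hle
  exfalso
  obtain ⟨G, hG⟩ := hg
  have hdb : ∀ i, d i ≤ n := by
    intro i
    rw [← hG i, deg]
    have h := Set.ncard_le_ncard (Set.subset_univ {w | G.Adj i w}) Set.finite_univ
    rwa [Set.ncard_univ, Nat.card_eq_fintype_card, Fintype.card_fin] at h
  have hsb : ∑ i, d i ≤ n * n := by
    calc ∑ i, d i ≤ ∑ _i : Fin n, n := Finset.sum_le_sum (fun i _ => hdb i)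
    _ = n * n := by simp [Finset.sum_const, mul_comm]
  omega

lemma sigma_lb {n : ℕ} {β : Type*} (H : SimpleGraph β) (b : ℕ)
    (h : ∀ l : ℕ, Even l → (∀ d : Fin n → ℕ, Antitone d → IsGraphic d →
      l ≤ ∑ i, d i → PotentiallyGraphic H d) → b ≤ l) : b ≤ sigmaPot H n := by
  rw [sigmaPot]
  obtain ⟨hE, hP⟩ := Nat.sInf_mem (sigma_set_nonempty n H)
  exact h _ hE hP

/-- Lower bound for `σ(K_{r+1} - U, n)` when `n - r` is odd. -/
theorem stmt_4 (r n k : ℕ) (hr : 4 ≤ r) (hn : r + 1 ≤ n) (hpar : Odd (n - r))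
    (hk7 : 7 ≤ k) (hkr : k ≤ r + 1) (U : SimpleGraph (Fin k))
    (hC4 : ¬ Contains U C4graph) (hZ4 : ¬ Contains U Z4graph)
    (f : Fin k ↪ Fin (r + 1)) :
    (r - 1) * (2 * n - r) - 3 * (n - r) - 1 ≤
      sigmaPot ((⊤ : SimpleGraph (Fin (r + 1))) \ U.map f) n := by
  apply sigma_lb
  intro l hEven hProp
  by_contra hcon
  push_neg at hcon
  obtain ⟨q, rfl⟩ : ∃ q, r = q + 3 := ⟨r - 3, by omega⟩
  have hpar' := Nat.odd_iff.mp hpar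
  obtain ⟨c, rfl⟩ : ∃ c, n = (q + 3) + (2*c + 1) := ⟨(n - (q + 3) - 1)/2, by omega⟩
  have hb : (q + 3 - 1) * (2 * (q + 3 + (2*c + 1)) - (q + 3)) - 3 * ((q + 3 + (2*c + 1)) - (q + 3)) - 1
      = (q*(q+2*c+3) + (q+2) + (2*c+2)*(q+1) + q) + 2 := by
    have e1 : q + 3 - 1 = q + 2 := by omega
    have e2 : 2 * (q + 3 + (2*c + 1)) - (q + 3) = q + 2*(2*c+1) + 3 := by omega
    have e3 : (q + 3 + (2*c + 1)) - (q + 3) = 2*c + 1 := by omega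
    rw [e1, e2, e3]
    have p1 : (q+2) * (q + 2*(2*c+1) + 3)
        = ((q*(q+2*c+3) + (q+2) + (2*c+2)*(q+1) + q) + 2 + 1) + 3*(2*c+1) := by ring
    rw [p1, Nat.add_sub_cancel, Nat.add_sub_cancel]
  have hsum : ∑ i, dseq (q+3) (q + 3 + (2*c + 1)) i
      = q*(q+2*c+3) + (q+2) + (2*c+2)*(q+1) + q := by
    rw [sum_dseq (q+3) (q + 3 + (2*c+1)) (by omega) (by omega)]
    have e4 : q + 3 - 3 = q := by omega
    have e5 : q + 3 + (2*c + 1) - 1 = q + 2*c + 3 := by omega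
    have e6 : q + 3 + (2*c + 1) - (q+3) + 1 = 2*c + 2 := by omega
    have e7 : q + 3 - 2 = q + 1 := by omega
    have e8 : q + 3 - 1 = q + 2 := by omega
    rw [e4, e5, e6, e7, e8]
  have hSeven : (q*(q+2*c+3) + (q+2) + (2*c+2)*(q+1) + q) % 2 = 0 := by
    apply Nat.even_iff.mp
    have hre : q*(q+2*c+3) + (q+2) + (2*c+2)*(q+1) + q
        = q*(q+2*c+3) + (2*c+2)*(q+1) + 2*(q+1) := by ring
    rw [hre]
    refine Even.add (Even.add ?_ ?_) ⟨q+1, by ring⟩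
    · rcases Nat.even_or_odd q with h | h
      · exact h.mul_right _
      · have he : Even (q+2*c+3) := by
          rw [Nat.even_iff]
          have := Nat.odd_iff.mp h
          omega
        exact he.mul_left _
    · exact Even.mul_right ⟨c+1, by ring⟩ _
  have hLeven := Nat.even_iff.mp hEven
  rw [hb] at hcon
  have hle : l ≤ q*(q+2*c+3) + (q+2) + (2*c+2)*(q+1) + q := by omega
  have hpot := hProp (dseq (q+3) (q + 3 + (2*c + 1)))
    (dseq_antitone _ _ (by omega) (by omega))
    ⟨G0 (q+3) (q + 3 + (2*c + 1)), deg_G0 _ _ (by omega) (by omega) (by omega)⟩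
    (by rw [hsum]; exact hle)
  obtain ⟨G, hdg, hcont⟩ := hpot
  exact no_contain (q+3) (q + 3 + (2*c + 1)) k (by omega) (by omega) U f hC4 hZ4 G hdg hcont
end

section
/- Let π = (d_1, ..., d_n) be a nonincreasing graphic sequence with n ≥ 5r + 18 and sum σ(π) ≥ (r-1)(2n-r) - 3(n-r) - 1. If d_{2r+2} ≤ r - 2 and there exists an index i with 1 ≤ i ≤ r-3 and d_i ≤ 2r - i - 1, then one obtains the contradiction σ(π) ≤ (r-1)(2n-r) - 3(n-r) - n + 5r + 16 < σ(π). Hence either d_{2r+2} ≥ r-1 or d_i ≥ 2r-i for all 1 ≤ i ≤ r-3. -/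
open SimpleGraph Finset

/-- For `n ≥ 5r+18` and `σ(π) ≥ (r-1)(2n-r) - 3(n-r) - 1`, one cannot have both
`d_{2r+2} ≤ r-2` and some `1 ≤ i ≤ r-3` with `d_i ≤ 2r-i-1`; hence
either `d_{2r+2} ≥ r-1` or `d_i ≥ 2r-i` for all `1 ≤ i ≤ r-3` (1-based indices). -/
theorem stmt_8 (r n : ℕ) (hn : 5 * r + 18 ≤ n) (d : Fin n → ℕ)
    (hA : Antitone d) (hG : IsGraphic d)
    (hσ : ((r : ℤ) - 1) * (2 * n - r) - 3 * ((n : ℤ) - r) - 1 ≤ ∑ i, (d i : ℤ)) :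
    ((r : ℤ) - 1 ≤ (d ⟨2 * r + 1, by omega⟩ : ℤ)) ∨
      ∀ i : ℕ, 1 ≤ i → ∀ _hi : i ≤ r - 3,
        (2 * (r : ℤ) - i ≤ (d ⟨i - 1, by omega⟩ : ℤ)) := by
  by_contra hcon
  push_neg at hcon
  obtain ⟨h2r, i, hi1, hi2, hdi⟩ := hcon
  have hr4 : 4 ≤ r := by omega
  have hin : i ≤ r - 3 := hi2
  have h2rn : 2 * r + 1 < n := by omega
  have hidx : i - 1 < n := by omega
  have hd1 : (d ⟨i - 1, hidx⟩ : ℤ) < 2 * (r : ℤ) - i := hdi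
  have hd2 : (d ⟨2 * r + 1, h2rn⟩ : ℤ) < (r : ℤ) - 1 := h2r
  obtain ⟨G, hGd⟩ := hG
  have hdn : ∀ v, d v ≤ n - 1 := by
    intro v
    rw [← hGd]
    have hsub : {w | G.Adj v w} ⊆ ({v}ᶜ : Set (Fin n)) := by
      intro w hw
      simp only [Set.mem_compl_iff, Set.mem_singleton_iff]
      rintro rfl
      exact G.irrefl hw
    have hle := Set.ncard_le_ncard hsub (Set.toFinite _)
    have h1 : ({v} : Set (Fin n)).ncard + ({v}ᶜ : Set (Fin n)).ncard = n := by
      rw [Set.ncard_add_ncard_compl]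
      simp
    have h2 : ({v} : Set (Fin n)).ncard = 1 := Set.ncard_singleton v
    unfold deg
    omega
  -- pointwise bounds
  set F : ℕ → ℤ := fun k => if hk : k < n then (d ⟨k, hk⟩ : ℤ) else 0 with hF
  set B : ℕ → ℤ := fun k => if k < i - 1 then (n : ℤ) - 1
    else if k < 2 * r + 1 then 2 * (r : ℤ) - i - 1 else (r : ℤ) - 2 with hB
  have hstep : ∀ k ∈ Finset.range n, F k ≤ B k := by
    intro k hk
    rw [Finset.mem_range] at hk
    simp only [hF, hB, dif_pos hk]
    split_ifs with h1 h2
    · have := hdn ⟨k, hk⟩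
      omega
    · have hle : d ⟨k, hk⟩ ≤ d ⟨i - 1, hidx⟩ := hA (by simp [Fin.mk_le_mk]; omega)
      omega
    · have hle : d ⟨k, hk⟩ ≤ d ⟨2 * r + 1, h2rn⟩ := hA (by simp [Fin.mk_le_mk]; omega)
      omega
  have hsum1 : ∑ v : Fin n, (d v : ℤ) = ∑ k ∈ Finset.range n, F k := by
    rw [← Fin.sum_univ_eq_sum_range F n]
    apply Finset.sum_congr rfl
    intro v _
    simp [hF, v.isLt]
  have hsplit : ∑ k ∈ Finset.range n, B k =
      ∑ k ∈ Finset.Ico 0 (i - 1), B k + ∑ k ∈ Finset.Ico (i - 1) (2 * r + 1), B k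
        + ∑ k ∈ Finset.Ico (2 * r + 1) n, B k := by
    rw [Finset.range_eq_Ico,
      ← Finset.sum_Ico_consecutive B (show (0 : ℕ) ≤ 2 * r + 1 by omega) (by omega),
      ← Finset.sum_Ico_consecutive B (Nat.zero_le (i - 1)) (show i - 1 ≤ 2 * r + 1 by omega)]
  have e1 : ∑ k ∈ Finset.Ico 0 (i - 1), B k = ((i : ℤ) - 1) * ((n : ℤ) - 1) := by
    have : ∀ k ∈ Finset.Ico 0 (i - 1), B k = (n : ℤ) - 1 := by
      intro k hk
      rw [Finset.mem_Ico] at hk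
      simp [hB, hk.2]
    rw [Finset.sum_congr rfl this, Finset.sum_const, Nat.card_Ico, nsmul_eq_mul]
    have : ((i - 1 - 0 : ℕ) : ℤ) = (i : ℤ) - 1 := by omega
    rw [this]
  have e2 : ∑ k ∈ Finset.Ico (i - 1) (2 * r + 1), B k
      = (2 * (r : ℤ) + 2 - i) * (2 * (r : ℤ) - i - 1) := by
    have : ∀ k ∈ Finset.Ico (i - 1) (2 * r + 1), B k = 2 * (r : ℤ) - i - 1 := by
      intro k hk
      rw [Finset.mem_Ico] at hk
      have h1 : ¬ k < i - 1 := by omega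
      simp [hB, h1, hk.2]; omega
    rw [Finset.sum_congr rfl this, Finset.sum_const, Nat.card_Ico, nsmul_eq_mul]
    have : ((2 * r + 1 - (i - 1) : ℕ) : ℤ) = 2 * (r : ℤ) + 2 - i := by omega
    rw [this]
  have e3 : ∑ k ∈ Finset.Ico (2 * r + 1) n, B k
      = ((n : ℤ) - 2 * r - 1) * ((r : ℤ) - 2) := by
    have : ∀ k ∈ Finset.Ico (2 * r + 1) n, B k = (r : ℤ) - 2 := by
      intro k hk
      rw [Finset.mem_Ico] at hk
      have h1 : ¬ k < i - 1 := by omega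
      have h2 : ¬ k < 2 * r + 1 := by omega
      simp [hB, h1, h2]; omega
    rw [Finset.sum_congr rfl this, Finset.sum_const, Nat.card_Ico, nsmul_eq_mul]
    have : ((n - (2 * r + 1) : ℕ) : ℤ) = (n : ℤ) - 2 * r - 1 := by omega
    rw [this]
  have htotal : ∑ v : Fin n, (d v : ℤ) ≤
      ((i : ℤ) - 1) * ((n : ℤ) - 1) + (2 * (r : ℤ) + 2 - i) * (2 * (r : ℤ) - i - 1)
        + ((n : ℤ) - 2 * r - 1) * ((r : ℤ) - 2) := by
    rw [hsum1, ← e1, ← e2, ← e3, ← hsplit]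
    exact Finset.sum_le_sum hstep
  have hI : (1 : ℤ) ≤ (i : ℤ) := by exact_mod_cast hi1
  have hIr : (i : ℤ) ≤ (r : ℤ) - 3 := by omega
  have hN : 5 * (r : ℤ) + 18 ≤ (n : ℤ) := by exact_mod_cast hn
  nlinarith [mul_nonneg (show (0 : ℤ) ≤ (r : ℤ) - 3 - i by omega)
      (show (0 : ℤ) ≤ (n : ℤ) + i - 3 * r - 5 by omega), hσ, htotal]
end

section
/- If a graphic sequence π = (d_1, ..., d_n) has a realization G containing a subgraph H on h vertices, then π has a realization G' containing H as a subgraph such that the vertices of H are the h vertices of largest degree in G'. -/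
attribute [local instance] Classical.propDecidable
open SimpleGraph Finset

lemma deg_eq_degree {n : ℕ} (G : SimpleGraph (Fin n)) (v : Fin n) :
    deg G v = G.degree v := by
  rw [deg, show {w | G.Adj v w} = ↑(G.neighborFinset v) by ext; simp, Set.ncard_coe_finset]
  rfl

def swapG {n : ℕ} (G : SimpleGraph (Fin n)) (u w : Fin n) (A P : Finset (Fin n)) :
    SimpleGraph (Fin n) where
  Adj x y := x ≠ y ∧
    ((G.Adj x y ∧ ¬((x = u ∧ y ∈ A) ∨ (y = u ∧ x ∈ A) ∨ (x = w ∧ y ∈ P) ∨ (y = w ∧ x ∈ P)))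
      ∨ ((x = w ∧ y ∈ A) ∨ (y = w ∧ x ∈ A) ∨ (x = u ∧ y ∈ P) ∨ (y = u ∧ x ∈ P)))
  symm := by
    refine ⟨?_⟩
    rintro x y ⟨hxy, h⟩
    refine ⟨hxy.symm, ?_⟩
    rcases h with ⟨h1, h2⟩ | h3
    · exact Or.inl ⟨h1.symm, by tauto⟩
    · exact Or.inr (by tauto)
  loopless := ⟨fun x h => h.1 rfl⟩

lemma swapG_adj {n : ℕ} (G : SimpleGraph (Fin n)) (u w : Fin n) (A P : Finset (Fin n))
    (x y : Fin n) : (swapG G u w A P).Adj x y ↔ x ≠ y ∧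
    ((G.Adj x y ∧ ¬((x = u ∧ y ∈ A) ∨ (y = u ∧ x ∈ A) ∨ (x = w ∧ y ∈ P) ∨ (y = w ∧ x ∈ P)))
      ∨ ((x = w ∧ y ∈ A) ∨ (y = w ∧ x ∈ A) ∨ (x = u ∧ y ∈ P) ∨ (y = u ∧ x ∈ P))) := Iff.rfl

lemma exchange {n : ℕ} (G : SimpleGraph (Fin n)) (u w : Fin n) (hne : u ≠ w)
    (hd : G.degree u ≤ G.degree w) :
    ∃ G' : SimpleGraph (Fin n), (∀ x, G'.degree x = G.degree x) ∧
      (∀ x, x ≠ w → G.Adj u x → G'.Adj w x) ∧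
      (∀ x y, x ≠ u → x ≠ w → y ≠ u → y ≠ w → G.Adj x y → G'.Adj x y) := by
  classical
  obtain ⟨A, hA⟩ : ∃ A, A = (G.neighborFinset u) \ insert w (G.neighborFinset w) := ⟨_, rfl⟩
  obtain ⟨B, hB⟩ : ∃ B, B = (G.neighborFinset w) \ insert u (G.neighborFinset u) := ⟨_, rfl⟩
  -- cardinality comparison
  have hswap1 : ∀ x ∈ (G.neighborFinset u) ∩ insert w (G.neighborFinset w),
      Equiv.swap u w x ∈ (G.neighborFinset w) ∩ insert u (G.neighborFinset u) := by
    intro x hx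
    simp only [Finset.mem_inter, Finset.mem_insert, SimpleGraph.mem_neighborFinset] at hx ⊢
    rcases hx.2 with rfl | hwx
    · rw [Equiv.swap_apply_right]
      exact ⟨hx.1.symm, Or.inl rfl⟩
    · have hxu : x ≠ u := hx.1.ne'
      have hxw : x ≠ w := hwx.ne'
      rw [Equiv.swap_apply_of_ne_of_ne hxu hxw]
      exact ⟨hwx, Or.inr hx.1⟩
  have hswap2 : ∀ x ∈ (G.neighborFinset w) ∩ insert u (G.neighborFinset u),
      Equiv.swap u w x ∈ (G.neighborFinset u) ∩ insert w (G.neighborFinset w) := by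
    intro x hx
    simp only [Finset.mem_inter, Finset.mem_insert, SimpleGraph.mem_neighborFinset] at hx ⊢
    rcases hx.2 with rfl | hux
    · rw [Equiv.swap_apply_left]
      exact ⟨hx.1.symm, Or.inl rfl⟩
    · have hxu : x ≠ u := hux.ne'
      have hxw : x ≠ w := hx.1.ne'
      rw [Equiv.swap_apply_of_ne_of_ne hxu hxw]
      exact ⟨hux, Or.inr hx.1⟩
  have hkey : ((G.neighborFinset u) ∩ insert w (G.neighborFinset w)).card
      = ((G.neighborFinset w) ∩ insert u (G.neighborFinset u)).card := by
    refine Finset.card_bij' (fun x _ => Equiv.swap u w x) (fun x _ => Equiv.swap u w x)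
      hswap1 hswap2 ?_ ?_ <;> intro x hx <;> simp
  have hABcard : A.card ≤ B.card := by
    have h1 : A.card + ((G.neighborFinset u) ∩ insert w (G.neighborFinset w)).card
        = (G.neighborFinset u).card := by
      rw [hA]; exact Finset.card_sdiff_add_card_inter _ _
    have h2 : B.card + ((G.neighborFinset w) ∩ insert u (G.neighborFinset u)).card
        = (G.neighborFinset w).card := by
      rw [hB]; exact Finset.card_sdiff_add_card_inter _ _
    have hd' : (G.neighborFinset u).card ≤ (G.neighborFinset w).card := hd
    omega
  -- injection from A to B
  have hcard : Fintype.card A ≤ Fintype.card B := by simpa [Fintype.card_coe] using hABcard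
  obtain ⟨e⟩ := Function.Embedding.nonempty_of_card_le hcard
  obtain ⟨ψ, hψB, hψinj⟩ : ∃ ψ : Fin n → Fin n, (∀ a ∈ A, ψ a ∈ B) ∧ Set.InjOn ψ A := by
    refine ⟨fun a => if h : a ∈ A then (e ⟨a, h⟩ : Fin n) else a, fun a ha => ?_, ?_⟩
    · simp only [dif_pos ha]
      exact (e ⟨a, ha⟩).2
    · intro a ha b hb hab
      simp only [Finset.mem_coe] at ha hb
      simp only [dif_pos ha, dif_pos hb] at hab
      exact congrArg Subtype.val (e.injective (Subtype.ext hab))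
  obtain ⟨P, hP⟩ : ∃ P, P = A.image ψ := ⟨_, rfl⟩
  have hPB : ∀ p ∈ P, p ∈ B := by
    intro p hp
    rw [hP] at hp
    obtain ⟨a, ha, rfl⟩ := Finset.mem_image.1 hp
    exact hψB a ha
  have hPcard : P.card = A.card := by
    rw [hP]; exact Finset.card_image_of_injOn hψinj
  -- basic membership facts
  have hAmem : ∀ a ∈ A, G.Adj u a ∧ a ≠ w ∧ ¬G.Adj w a := by
    intro a ha
    rw [hA, Finset.mem_sdiff, Finset.mem_insert, SimpleGraph.mem_neighborFinset] at ha
    push_neg at ha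
    exact ⟨ha.1, by simpa [SimpleGraph.mem_neighborFinset] using ha.2⟩
  have hBmem : ∀ b ∈ B, G.Adj w b ∧ b ≠ u ∧ ¬G.Adj u b := by
    intro b hb
    rw [hB, Finset.mem_sdiff, Finset.mem_insert, SimpleGraph.mem_neighborFinset] at hb
    push_neg at hb
    exact ⟨hb.1, by simpa [SimpleGraph.mem_neighborFinset] using hb.2⟩
  have hAu : u ∉ A := fun h => G.irrefl (hAmem u h).1
  have hAw : w ∉ A := fun h => (hAmem w h).2.1 rfl
  have hPu : u ∉ P := fun h => (hBmem u (hPB u h)).2.1 rfl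
  have hPw : w ∉ P := fun h => G.irrefl (hBmem w (hPB w h)).1
  have hAP : ∀ a ∈ A, a ∉ P := fun a ha hp => (hAmem a ha).2.2 (hBmem a (hPB a hp)).1
  refine ⟨swapG G u w A P, ?_, ?_, ?_⟩
  · -- degrees
    intro x
    show ((swapG G u w A P).neighborFinset x).card = (G.neighborFinset x).card
    by_cases hxu : x = u
    · rw [hxu]
      have hset : (swapG G u w A P).neighborFinset u = ((G.neighborFinset u) \ A) ∪ P := by
        ext y
        simp only [SimpleGraph.mem_neighborFinset, swapG_adj, Finset.mem_union,
          Finset.mem_sdiff]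
        constructor
        · rintro ⟨hne', ⟨hadj, hnbad⟩ | (⟨huw, _⟩ | ⟨_, huA⟩ | ⟨_, hyP⟩ | ⟨_, huP⟩)⟩
          · exact Or.inl ⟨hadj, fun hyA => hnbad (Or.inl ⟨by trivial, hyA⟩)⟩
          · exact absurd huw hne
          · exact absurd huA hAu
          · exact Or.inr hyP
          · exact absurd huP hPu
        · rintro (⟨hadj, hyA⟩ | hyP)
          · refine ⟨hadj.ne, Or.inl ⟨hadj, ?_⟩⟩
            rintro (⟨_, h⟩ | ⟨_, h⟩ | ⟨h, _⟩ | ⟨_, h⟩)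
            · exact hyA h
            · exact hAu h
            · exact hne h
            · exact hPu h
          · have hyu : u ≠ y := fun h => hPu (h ▸ hyP)
            exact ⟨hyu, Or.inr (Or.inr (Or.inr (Or.inl ⟨by trivial, hyP⟩)))⟩
      rw [hset]
      have hAsub : A ⊆ G.neighborFinset u := fun a ha => by
        rw [SimpleGraph.mem_neighborFinset]; exact (hAmem a ha).1
      have hdisj : Disjoint ((G.neighborFinset u) \ A) P := by
        rw [Finset.disjoint_right]
        intro p hp
        simp only [Finset.mem_sdiff, SimpleGraph.mem_neighborFinset, not_and, not_not]
        intro h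
        exact absurd h (hBmem p (hPB p hp)).2.2
      rw [Finset.card_union_of_disjoint hdisj, Finset.card_sdiff_of_subset hAsub, hPcard]
      have := Finset.card_le_card hAsub
      omega
    · by_cases hxw : x = w
      · rw [hxw]
        have hset : (swapG G u w A P).neighborFinset w = ((G.neighborFinset w) \ P) ∪ A := by
          ext y
          simp only [SimpleGraph.mem_neighborFinset, swapG_adj, Finset.mem_union,
            Finset.mem_sdiff]
          constructor
          · rintro ⟨hne', ⟨hadj, hnbad⟩ | (⟨_, hyA⟩ | ⟨_, hwA⟩ | ⟨hwu, _⟩ | ⟨_, hwP⟩)⟩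
            · exact Or.inl ⟨hadj, fun hyP => hnbad (Or.inr (Or.inr (Or.inl ⟨by trivial, hyP⟩)))⟩
            · exact Or.inr hyA
            · exact absurd hwA hAw
            · exact absurd hwu.symm hne
            · exact absurd hwP hPw
          · rintro (⟨hadj, hyP⟩ | hyA)
            · refine ⟨hadj.ne, Or.inl ⟨hadj, ?_⟩⟩
              rintro (⟨h, _⟩ | ⟨_, h⟩ | ⟨_, h⟩ | ⟨_, h⟩)
              · exact hne h.symm
              · exact hAw h
              · exact hyP h
              · exact hPw h
            · have hyw : w ≠ y := fun h => hAw (h ▸ hyA)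
              exact ⟨hyw, Or.inr (Or.inl ⟨by trivial, hyA⟩)⟩
        rw [hset]
        have hPsub : P ⊆ G.neighborFinset w := fun p hp => by
          rw [SimpleGraph.mem_neighborFinset]; exact (hBmem p (hPB p hp)).1
        have hdisj : Disjoint ((G.neighborFinset w) \ P) A := by
          rw [Finset.disjoint_right]
          intro a ha
          simp only [Finset.mem_sdiff, SimpleGraph.mem_neighborFinset, not_and, not_not]
          intro h
          exact absurd h (hAmem a ha).2.2
        rw [Finset.card_union_of_disjoint hdisj, Finset.card_sdiff_of_subset hPsub, hPcard]
        have := Finset.card_le_card hPsub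
        omega
      · by_cases hxA : x ∈ A
        · obtain ⟨hadjux, hxnw, hnadjwx⟩ := hAmem x hxA
          have hset : (swapG G u w A P).neighborFinset x
              = insert w ((G.neighborFinset x).erase u) := by
            ext y
            simp only [SimpleGraph.mem_neighborFinset, swapG_adj, Finset.mem_insert,
              Finset.mem_erase]
            constructor
            · rintro ⟨hne', ⟨hadj, hnbad⟩ | (⟨hxw', _⟩ | ⟨hyw, _⟩ | ⟨hxu', _⟩ | ⟨_, hxP⟩)⟩
              · exact Or.inr ⟨fun hyu => hnbad (Or.inr (Or.inl ⟨hyu, hxA⟩)), hadj⟩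
              · exact absurd hxw' hxw
              · exact Or.inl hyw
              · exact absurd hxu' hxu
              · exact absurd hxP (hAP x hxA)
            · rintro (hyw | ⟨hyu, hadj⟩)
              · subst hyw
                exact ⟨hxnw, Or.inr (Or.inr (Or.inl ⟨rfl, hxA⟩))⟩
              · refine ⟨hadj.ne, Or.inl ⟨hadj, ?_⟩⟩
                rintro (⟨h, _⟩ | ⟨h, _⟩ | ⟨h, _⟩ | ⟨_, h⟩)
                · exact hxu h
                · exact hyu h
                · exact hxw h
                · exact hAP x hxA h
          rw [hset]
          have hu_mem : u ∈ G.neighborFinset x := by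
            rw [SimpleGraph.mem_neighborFinset]; exact hadjux.symm
          have hw_nmem : w ∉ (G.neighborFinset x).erase u := by
            simp only [Finset.mem_erase, SimpleGraph.mem_neighborFinset]
            rintro ⟨_, h⟩
            exact hnadjwx h.symm
          rw [Finset.card_insert_of_notMem hw_nmem, Finset.card_erase_of_mem hu_mem]
          have : 0 < (G.neighborFinset x).card := Finset.card_pos.2 ⟨u, hu_mem⟩
          omega
        · by_cases hxP : x ∈ P
          · obtain ⟨hadjwx, hxnu, hnadjux⟩ := hBmem x (hPB x hxP)
            have hset : (swapG G u w A P).neighborFinset x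
                = insert u ((G.neighborFinset x).erase w) := by
              ext y
              simp only [SimpleGraph.mem_neighborFinset, swapG_adj, Finset.mem_insert,
                Finset.mem_erase]
              constructor
              · rintro ⟨hne', ⟨hadj, hnbad⟩ | (⟨hxw', _⟩ | ⟨_, hxA'⟩ | ⟨hxu', _⟩ | ⟨hyu, _⟩)⟩
                · exact Or.inr ⟨fun hyw => hnbad (Or.inr (Or.inr (Or.inr ⟨hyw, hxP⟩))), hadj⟩
                · exact absurd hxw' hxw
                · exact absurd hxA' hxA
                · exact absurd hxu' hxu
                · exact Or.inl hyu
              · rintro (hyu | ⟨hyw, hadj⟩)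
                · subst hyu
                  exact ⟨hxnu, Or.inr (Or.inr (Or.inr (Or.inr ⟨rfl, hxP⟩)))⟩
                · refine ⟨hadj.ne, Or.inl ⟨hadj, ?_⟩⟩
                  rintro (⟨h, _⟩ | ⟨_, h⟩ | ⟨h, _⟩ | ⟨h, _⟩)
                  · exact hxu h
                  · exact hxA h
                  · exact hxw h
                  · exact hyw h
            rw [hset]
            have hw_mem : w ∈ G.neighborFinset x := by
              rw [SimpleGraph.mem_neighborFinset]; exact hadjwx.symm
            have hu_nmem : u ∉ (G.neighborFinset x).erase w := by
              simp only [Finset.mem_erase, SimpleGraph.mem_neighborFinset]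
              rintro ⟨_, h⟩
              exact hnadjux h.symm
            rw [Finset.card_insert_of_notMem hu_nmem, Finset.card_erase_of_mem hw_mem]
            have : 0 < (G.neighborFinset x).card := Finset.card_pos.2 ⟨w, hw_mem⟩
            omega
          · have hset : (swapG G u w A P).neighborFinset x = G.neighborFinset x := by
              ext y
              simp only [SimpleGraph.mem_neighborFinset, swapG_adj]
              constructor
              · rintro ⟨hne', ⟨hadj, _⟩ | (⟨h, _⟩ | ⟨_, h⟩ | ⟨h, _⟩ | ⟨_, h⟩)⟩
                · exact hadj
                · exact absurd h hxw
                · exact absurd h hxA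
                · exact absurd h hxu
                · exact absurd h hxP
              · intro hadj
                refine ⟨hadj.ne, Or.inl ⟨hadj, ?_⟩⟩
                rintro (⟨h, _⟩ | ⟨_, h⟩ | ⟨h, _⟩ | ⟨_, h⟩)
                · exact hxu h
                · exact hxA h
                · exact hxw h
                · exact hxP h
            rw [hset]
  · -- new edges from w
    intro x hxw hadj
    have hxu : x ≠ u := hadj.ne'
    rw [swapG_adj]
    refine ⟨Ne.symm hxw, ?_⟩
    by_cases hxA : x ∈ A
    · exact Or.inr (Or.inl ⟨rfl, hxA⟩)
    · have hxNw : G.Adj w x := by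
        by_contra hcon
        apply hxA
        rw [hA, Finset.mem_sdiff, Finset.mem_insert]
        simp only [SimpleGraph.mem_neighborFinset]
        exact ⟨hadj, by push_neg; exact ⟨hxw, hcon⟩⟩
      have hxP : x ∉ P := fun h => (hBmem x (hPB x h)).2.2 hadj
      refine Or.inl ⟨hxNw, ?_⟩
      rintro (⟨h, _⟩ | ⟨_, h⟩ | ⟨_, h⟩ | ⟨h, _⟩)
      · exact hne h.symm
      · exact hAw h
      · exact hxP h
      · exact hxw h
  · -- old edges away from u, w
    intro x y hxu hxw hyu hyw hadj
    rw [swapG_adj]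
    refine ⟨hadj.ne, Or.inl ⟨hadj, ?_⟩⟩
    rintro (⟨h, _⟩ | ⟨h, _⟩ | ⟨h, _⟩ | ⟨h, _⟩)
    · exact hxu h
    · exact hyu h
    · exact hxw h
    · exact hyw h

lemma sum_f_le {n hh : ℕ} (d : Fin n → ℕ) (f : Fin hh ↪ Fin n) :
    ∑ v, d (f v) ≤ ∑ i, d i := by
  rw [show (∑ v, d (f v)) = ∑ i ∈ Finset.univ.image f, d i from
    (Finset.sum_image (fun x _ y _ h => f.injective h)).symm]
  exact Finset.sum_le_sum_of_subset (Finset.subset_univ _)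

lemma step_lemma {n hh : ℕ} (H : SimpleGraph (Fin hh)) (d : Fin n → ℕ)
    (G : SimpleGraph (Fin n)) (f : Fin hh ↪ Fin n)
    (hdeg : ∀ i, G.degree i = d i)
    (hemb : ∀ ⦃u v : Fin hh⦄, H.Adj u v → G.Adj (f u) (f v)) :
    (∀ (v : Fin hh) (w : Fin n), w ∉ Set.range f → d w ≤ d (f v)) ∨
    ∃ (G' : SimpleGraph (Fin n)) (f' : Fin hh ↪ Fin n),
      (∀ i, G'.degree i = d i) ∧ (∀ ⦃u v : Fin hh⦄, H.Adj u v → G'.Adj (f' u) (f' v)) ∧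
      (∑ i, d i) - (∑ v, d (f' v)) < (∑ i, d i) - (∑ v, d (f v)) := by
  by_cases hbad : ∃ (v : Fin hh) (w : Fin n), w ∉ Set.range f ∧ d (f v) < d w
  · obtain ⟨v, w, hw, hlt⟩ := hbad
    right
    have hne : f v ≠ w := fun h => hw ⟨v, h⟩
    have hdle : G.degree (f v) ≤ G.degree w := by
      rw [hdeg, hdeg]; exact hlt.le
    obtain ⟨G', hd', h2, h3⟩ := exchange G (f v) w hne hdle
    have hf'inj : Function.Injective (fun x => if x = v then w else f x) := by
      intro a b hab
      simp only at hab
      by_cases ha : a = v <;> by_cases hb : b = v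
      · rw [ha, hb]
      · rw [if_pos ha, if_neg hb] at hab
        exact absurd ⟨b, hab.symm⟩ hw
      · rw [if_neg ha, if_pos hb] at hab
        exact absurd ⟨a, hab⟩ hw
      · rw [if_neg ha, if_neg hb] at hab
        exact f.injective hab
    refine ⟨G', ⟨fun x => if x = v then w else f x, hf'inj⟩, fun i => by rw [hd', hdeg], ?_, ?_⟩
    · intro a b hadj
      simp only [Function.Embedding.coeFn_mk]
      by_cases ha : a = v <;> by_cases hb : b = v
      · exact absurd (ha.trans hb.symm) hadj.ne
      · rw [if_pos ha, if_neg hb]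
        subst ha
        have : f b ≠ w := fun h => hw ⟨b, h⟩
        exact h2 (f b) this (hemb hadj)
      · rw [if_neg ha, if_pos hb]
        subst hb
        have : f a ≠ w := fun h => hw ⟨a, h⟩
        exact (h2 (f a) this (hemb hadj).symm).symm
      · rw [if_neg ha, if_neg hb]
        have hau : f a ≠ f v := fun h => ha (f.injective h)
        have hbu : f b ≠ f v := fun h => hb (f.injective h)
        have haw : f a ≠ w := fun h => hw ⟨a, h⟩
        have hbw : f b ≠ w := fun h => hw ⟨b, h⟩
        exact h3 (f a) (f b) hau haw hbu hbw (hemb hadj)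
    · -- measure decreases
      set f' : Fin hh ↪ Fin n := ⟨fun x => if x = v then w else f x, hf'inj⟩ with hf'
      have hS : d (f v) + ∑ x ∈ Finset.univ.erase v, d (f x) = ∑ x, d (f x) :=
        Finset.add_sum_erase _ (fun x => d (f x)) (Finset.mem_univ v)
      have hS' : d w + ∑ x ∈ Finset.univ.erase v, d (f x) = ∑ x, d (f' x) := by
        have h1 : d (f' v) + ∑ x ∈ Finset.univ.erase v, d (f' x) = ∑ x, d (f' x) :=
          Finset.add_sum_erase _ (fun x => d (f' x)) (Finset.mem_univ v)
        have h2' : d (f' v) = d w := by simp [hf']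
        have h3' : ∑ x ∈ Finset.univ.erase v, d (f' x) = ∑ x ∈ Finset.univ.erase v, d (f x) := by
          refine Finset.sum_congr rfl fun x hx => ?_
          have : x ≠ v := (Finset.mem_erase.1 hx).1
          simp [hf', this]
        rw [← h1, h2', h3']
      have hle1 : ∑ x, d (f x) ≤ ∑ i, d i := sum_f_le d f
      have hle2 : ∑ x, d (f' x) ≤ ∑ i, d i := sum_f_le d f'
      omega
  · left
    intro v w hw
    push_neg at hbad
    exact hbad v w hw

lemma main_aux {n hh : ℕ} (H : SimpleGraph (Fin hh)) (d : Fin n → ℕ) :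
    ∀ (k : ℕ) (G : SimpleGraph (Fin n)) (f : Fin hh ↪ Fin n),
    (∀ i, G.degree i = d i) →
    (∀ ⦃u v : Fin hh⦄, H.Adj u v → G.Adj (f u) (f v)) →
    (∑ i, d i) - (∑ v, d (f v)) ≤ k →
    ∃ G' : SimpleGraph (Fin n), (∀ i, G'.degree i = d i) ∧
      ∃ f' : Fin hh ↪ Fin n, (∀ ⦃u v : Fin hh⦄, H.Adj u v → G'.Adj (f' u) (f' v)) ∧
        (∀ (v : Fin hh) (w : Fin n), w ∉ Set.range f' → d w ≤ d (f' v)) := by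
  intro k
  induction k with
  | zero =>
    intro G f hdeg hemb hle
    rcases step_lemma H d G f hdeg hemb with hdone | ⟨G', f', _, _, hlt⟩
    · exact ⟨G, hdeg, f, hemb, hdone⟩
    · omega
  | succ k ih =>
    intro G f hdeg hemb hle
    rcases step_lemma H d G f hdeg hemb with hdone | ⟨G', f', hdeg', hemb', hlt⟩
    · exact ⟨G, hdeg, f, hemb, hdone⟩
    · exact ih G' f' hdeg' hemb' (by omega)


/-- Gould–Jacobson–Lehel: if some realization of `π` contains `H`, then there is a
realization containing `H` on the vertices of largest degree. -/
theorem stmt_10 (n h : ℕ) (d : Fin n → ℕ) (H : SimpleGraph (Fin h))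
    (G : SimpleGraph (Fin n)) (hG : ∀ i, deg G i = d i) (hHG : Contains G H) :
    ∃ G' : SimpleGraph (Fin n), (∀ i, deg G' i = d i) ∧
      ∃ f : Fin h ↪ Fin n,
        (∀ ⦃u v : Fin h⦄, H.Adj u v → G'.Adj (f u) (f v)) ∧
        (∀ (v : Fin h) (w : Fin n), w ∉ Set.range f → deg G' w ≤ deg G' (f v)) := by
  obtain ⟨f, hemb⟩ := hHG
  have hdeg : ∀ i, G.degree i = d i := fun i => by rw [← deg_eq_degree]; exact hG i
  obtain ⟨G', hdeg', f', hemb', htop⟩ :=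
    main_aux H d ((∑ i, d i) - (∑ v, d (f v))) G f hdeg hemb le_rfl
  refine ⟨G', fun i => by rw [deg_eq_degree]; exact hdeg' i, f', hemb', ?_⟩
  intro v w hw
  rw [deg_eq_degree, deg_eq_degree, hdeg', hdeg']
  exact htop v w hw
end

section
/- Let π = (d_1, ..., d_n) be a nonincreasing graphic sequence and let G be a realization of π on vertices v_1, ..., v_n with deg(v_i) = d_i. If the subgraph of G induced by {v_1, ..., v_{r+1}} has at most C(r+1,2) - 1 edges, then there exists a realization H of π with deg_H(v_i) = d_i for i = 1, ..., r+1 such that v_r and v_{r+1} are not adjacent in H. -/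
open SimpleGraph Finset

set_option maxHeartbeats 1000000

lemma ncard_insert_diff {n : ℕ} (S : Set (Fin n)) (a b : Fin n)
    (ha : a ∉ S) (hb : b ∈ S) :
    (insert a (S \ {b})).ncard = S.ncard := by
  rw [Set.ncard_insert_of_notMem (fun h => ha h.1),
    Set.ncard_diff_singleton_add_one hb]

lemma deg_aux {n : ℕ} (G H : SimpleGraph (Fin n)) (v a b : Fin n)
    (h : {w | H.Adj v w} = insert a ({w | G.Adj v w} \ {b}))
    (hb : G.Adj v b) (ha : ¬ G.Adj v a) :
    deg H v = deg G v := by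
  rw [deg, deg, h]
  exact ncard_insert_diff {w | G.Adj v w} a b ha hb

lemma switch_exists {n : ℕ} (G : SimpleGraph (Fin n)) (p q x y : Fin n)
    (hpq : G.Adj p q) (hxy : G.Adj x y) (hpx : ¬G.Adj p x) (hqy : ¬G.Adj q y)
    (hpxne : p ≠ x) (hqyne : q ≠ y) (hpyne : p ≠ y) (hqxne : q ≠ x) :
    ∃ H : SimpleGraph (Fin n), (∀ v, deg H v = deg G v) ∧
      ∀ u v, H.Adj u v ↔
        ((G.Adj u v ∧ ¬((u=p∧v=q)∨(u=q∧v=p)∨(u=x∧v=y)∨(u=y∧v=x))) ∨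
         ((u=p∧v=x)∨(u=x∧v=p)∨(u=q∧v=y)∨(u=y∧v=q))) := by
  have hpqne : p ≠ q := hpq.ne
  have hxyne : x ≠ y := hxy.ne
  let H : SimpleGraph (Fin n) :=
    { Adj := fun u v => ((G.Adj u v ∧ ¬((u=p∧v=q)∨(u=q∧v=p)∨(u=x∧v=y)∨(u=y∧v=x))) ∨
         ((u=p∧v=x)∨(u=x∧v=p)∨(u=q∧v=y)∨(u=y∧v=q)))
      symm := by
        refine ⟨fun u v h => ?_⟩
        have hs : G.Adj u v → G.Adj v u := fun h => G.symm.symm _ _ h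
        tauto
      loopless := by
        refine ⟨fun u h => ?_⟩
        rcases h with ⟨hadj, _⟩ | (⟨h1,h2⟩|⟨h1,h2⟩|⟨h1,h2⟩|⟨h1,h2⟩)
        · exact G.loopless.irrefl u hadj
        · exact hpxne (h1.symm.trans h2)
        · exact hpxne (h2.symm.trans h1)
        · exact hqyne (h1.symm.trans h2)
        · exact hqyne (h2.symm.trans h1) }
  have hchar : ∀ u v, H.Adj u v ↔
      ((G.Adj u v ∧ ¬((u=p∧v=q)∨(u=q∧v=p)∨(u=x∧v=y)∨(u=y∧v=x))) ∨
       ((u=p∧v=x)∨(u=x∧v=p)∨(u=q∧v=y)∨(u=y∧v=q))) := fun u v => Iff.rfl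
  refine ⟨H, ?_, hchar⟩
  intro v
  by_cases hvp : v = p
  · subst hvp
    refine deg_aux G H v x q ?_ hpq hpx
    ext w
    simp only [Set.mem_setOf_eq, Set.mem_insert_iff, Set.mem_diff,
      Set.mem_singleton_iff, hchar]
    constructor <;> intro h <;> tauto
  by_cases hvq : v = q
  · subst hvq
    refine deg_aux G H v y p ?_ hpq.symm hqy
    ext w
    simp only [Set.mem_setOf_eq, Set.mem_insert_iff, Set.mem_diff,
      Set.mem_singleton_iff, hchar]
    constructor <;> intro h <;> tauto
  by_cases hvx : v = x
  · subst hvx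
    refine deg_aux G H v p y ?_ hxy (fun h => hpx h.symm)
    ext w
    simp only [Set.mem_setOf_eq, Set.mem_insert_iff, Set.mem_diff,
      Set.mem_singleton_iff, hchar]
    constructor <;> intro h <;> tauto
  by_cases hvy : v = y
  · subst hvy
    refine deg_aux G H v q x ?_ hxy.symm (fun h => hqy h.symm)
    ext w
    simp only [Set.mem_setOf_eq, Set.mem_insert_iff, Set.mem_diff,
      Set.mem_singleton_iff, hchar]
    constructor <;> intro h <;> tauto
  · have hset : {w | H.Adj v w} = {w | G.Adj v w} := by
      ext w
      simp only [Set.mem_setOf_eq, hchar]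
      constructor <;> intro h <;> tauto
    rw [deg, deg, hset]

lemma find_w {n : ℕ} (G : SimpleGraph (Fin n)) (a c t : Fin n)
    (hct : G.Adj c t) (hat : ¬G.Adj a t) (hac : a ≠ c) (hatne : a ≠ t)
    (hdeg : deg G c ≤ deg G a) :
    ∃ w, G.Adj a w ∧ ¬G.Adj c w ∧ w ≠ a ∧ w ≠ c ∧ w ≠ t := by
  by_contra hcon
  push_neg at hcon
  have hsub : {w | G.Adj a w} \ {c} ⊆ {w | G.Adj c w} \ {a} := by
    rintro w ⟨hw, hwc⟩
    simp only [Set.mem_singleton_iff] at hwc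
    by_cases hcw : G.Adj c w
    · exact ⟨hcw, fun h => G.loopless.irrefl a (h ▸ hw)⟩
    · exfalso
      have := hcon w hw hcw (fun h => G.loopless.irrefl a (h ▸ hw)) hwc
      exact hat (this ▸ hw)
  have hss : {w | G.Adj a w} \ {c} ⊂ {w | G.Adj c w} \ {a} := by
    refine (Set.ssubset_iff_of_subset hsub).mpr ⟨t, ⟨hct, ?_⟩, fun h => hat h.1⟩
    simp only [Set.mem_singleton_iff]
    exact fun h => hatne h.symm
  have hlt := Set.ncard_lt_ncard hss (Set.toFinite _)
  have hda : deg G a = ({w | G.Adj a w}).ncard := rfl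
  have hdc : deg G c = ({w | G.Adj c w}).ncard := rfl
  have hle2 : ({w | G.Adj c w} \ {a}).ncard ≤ ({w | G.Adj c w}).ncard :=
    Set.ncard_le_ncard Set.diff_subset (Set.toFinite _)
  by_cases hadj : G.Adj a c
  · have e1 : ({w | G.Adj a w} \ {c}).ncard + 1 = ({w | G.Adj a w}).ncard :=
      Set.ncard_diff_singleton_add_one hadj
    have e2 : ({w | G.Adj c w} \ {a}).ncard + 1 = ({w | G.Adj c w}).ncard :=
      Set.ncard_diff_singleton_add_one hadj.symm
    have hfin : deg G a < deg G c := by rw [hda, hdc]; omega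
    exact absurd hdeg (not_le.mpr hfin)
  · have e1 : {w | G.Adj a w} \ {c} = {w | G.Adj a w} :=
      Set.diff_singleton_eq_self hadj
    rw [e1] at hlt
    have hfin : deg G a < deg G c := by
      rw [hda, hdc]; exact hlt.trans_le hle2
    exact absurd hdeg (not_le.mpr hfin)

lemma resolve {n : ℕ} (G : SimpleGraph (Fin n)) (a c t : Fin n)
    (hct : G.Adj c t) (hat : ¬G.Adj a t) (hac : a ≠ c) (hatne : a ≠ t)
    (hdeg : deg G c ≤ deg G a) :
    ∃ H : SimpleGraph (Fin n), (∀ v, deg H v = deg G v) ∧ ¬H.Adj c t := by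
  obtain ⟨w, haw, hcw, hwa, hwc, hwt⟩ := find_w G a c t hct hat hac hatne hdeg
  obtain ⟨H, hdegH, hchar⟩ := switch_exists G c t w a hct haw.symm hcw
    (fun h => hat h.symm) hwc.symm hatne.symm hac.symm hwt.symm
  refine ⟨H, hdegH, ?_⟩
  rw [hchar]
  rintro (⟨_, hrem⟩ | (⟨h1,h2⟩|⟨h1,h2⟩|⟨h1,h2⟩|⟨h1,h2⟩))
  · exact hrem (Or.inl ⟨rfl, rfl⟩)
  · exact hwt h2.symm
  · exact hwc h1.symm
  · exact hct.ne h1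
  · exact hac h1.symm

lemma easy_case {n : ℕ} (G : SimpleGraph (Fin n)) (u v a : Fin n)
    (huv : G.Adj u v) (hau : a ≠ u) (hav : a ≠ v)
    (hdu : deg G u ≤ deg G a) (hdv : deg G v ≤ deg G a)
    (h : ¬G.Adj a v ∨ ¬G.Adj a u) :
    ∃ H : SimpleGraph (Fin n), (∀ i, deg H i = deg G i) ∧ ¬H.Adj u v := by
  rcases h with h | h
  · exact resolve G a u v huv h hau hav hdu
  · obtain ⟨H, h1, h2⟩ := resolve G a v u huv.symm h hav hau hdv
    exact ⟨H, h1, fun hh => h2 hh.symm⟩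

lemma exists_nonedge {n r : ℕ} (hr : 1 ≤ r) (hn : r + 1 ≤ n) (G : SimpleGraph (Fin n))
    (hEdges : Set.ncard {e ∈ G.edgeSet | ∀ v ∈ e, v.val < r + 1} ≤ (r + 1) * r / 2 - 1) :
    ∃ a b : Fin n, a.val < r + 1 ∧ b.val < r + 1 ∧ a ≠ b ∧ ¬G.Adj a b := by
  classical
  by_contra hcon
  push_neg at hcon
  set f : Fin (r+1) ↪ Fin n := Fin.castLEEmb hn with hf
  have hinj : Function.Injective (Sym2.map f) := Sym2.map.injective f.injective
  have hsub : (Sym2.map f) '' (⊤ : SimpleGraph (Fin (r+1))).edgeSet ⊆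
      {e ∈ G.edgeSet | ∀ v ∈ e, v.val < r + 1} := by
    rintro e ⟨e', he', rfl⟩
    induction e' using Sym2.ind with
    | _ i j =>
      rw [SimpleGraph.mem_edgeSet] at he'
      have hij : i ≠ j := he'.ne
      have hvi : ((f i) : Fin n).val < r + 1 := i.isLt
      have hvj : ((f j) : Fin n).val < r + 1 := j.isLt
      constructor
      · rw [Sym2.map_pair_eq, SimpleGraph.mem_edgeSet]
        exact hcon (f i) (f j) hvi hvj (f.injective.ne hij)
      · intro v hv
        rw [Sym2.map_pair_eq, Sym2.mem_iff] at hv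
        rcases hv with rfl | rfl
        · exact hvi
        · exact hvj
  have h1 : ((Sym2.map f) '' (⊤ : SimpleGraph (Fin (r+1))).edgeSet).ncard =
      ((⊤ : SimpleGraph (Fin (r+1))).edgeSet).ncard :=
    Set.ncard_image_of_injective _ hinj
  have h2 : ((⊤ : SimpleGraph (Fin (r+1))).edgeSet).ncard = (r+1).choose 2 := by
    rw [Set.ncard_eq_toFinset_card']
    have := SimpleGraph.card_edgeFinset_top_eq_card_choose_two (V := Fin (r+1))
    rw [SimpleGraph.edgeFinset] at this
    simpa using this
  have h3 : (r+1).choose 2 = (r+1) * r / 2 := by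
    rw [Nat.choose_two_right]
    simp
  have h4 : ((Sym2.map f) '' (⊤ : SimpleGraph (Fin (r+1))).edgeSet).ncard ≤
      Set.ncard {e ∈ G.edgeSet | ∀ v ∈ e, v.val < r + 1} :=
    Set.ncard_le_ncard hsub (Set.toFinite _)
  have h5 : 1 ≤ (r+1) * r / 2 := by
    have : 2 ≤ (r+1) * r := by nlinarith
    omega
  omega

lemma core (r n : ℕ) (hr : 1 ≤ r) (hn : r + 1 ≤ n) (d : Fin n → ℕ)
    (hA : Antitone d) (G : SimpleGraph (Fin n)) (hG : ∀ i, deg G i = d i)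
    (hEdges : Set.ncard {e ∈ G.edgeSet | ∀ v ∈ e, v.val < r + 1} ≤ (r + 1) * r / 2 - 1)
    (u v : Fin n) (huval : u.val = r - 1) (hvval : v.val = r) :
    ∃ H : SimpleGraph (Fin n), (∀ i, deg H i = d i) ∧ ¬ H.Adj u v := by
  classical
  by_cases hGuv : G.Adj u v
  swap
  · exact ⟨G, hG, hGuv⟩
  have huv : u ≠ v := by rw [Fin.ne_iff_vne, huval, hvval]; omega
  obtain ⟨a, b, ha1, hb1, hab, hnadj⟩ := exists_nonedge hr hn G hEdges
  have key : ∃ a b : Fin n, a.val < r + 1 ∧ b.val < r + 1 ∧ a ≠ b ∧ ¬G.Adj a b ∧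
      a ≠ u ∧ a ≠ v := by
    by_cases h1 : a ≠ u ∧ a ≠ v
    · exact ⟨a, b, ha1, hb1, hab, hnadj, h1.1, h1.2⟩
    · rcases not_and_or.mp h1 with h | h
      · have ha : a = u := not_not.mp h
        refine ⟨b, a, hb1, ha1, hab.symm, fun h' => hnadj h'.symm, ?_, ?_⟩
        · exact fun hb => hab (ha.trans hb.symm)
        · exact fun hb => hnadj (by rw [ha, hb]; exact hGuv)
      · have ha : a = v := not_not.mp h
        refine ⟨b, a, hb1, ha1, hab.symm, fun h' => hnadj h'.symm, ?_, ?_⟩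
        · exact fun hb => hnadj (by rw [ha, hb]; exact hGuv.symm)
        · exact fun hb => hab (ha.trans hb.symm)
  clear ha1 hb1 hab hnadj
  obtain ⟨a, b, ha1, hb1, hab, hnadj, hau, hav⟩ := key
  have haval : a.val < r - 1 := by
    have h1 : a.val ≠ r - 1 := fun h => hau (Fin.ext (h.trans huval.symm))
    have h2 : a.val ≠ r := fun h => hav (Fin.ext (h.trans hvval.symm))
    omega
  have hdau : deg G u ≤ deg G a := by
    simp only [hG]
    exact hA (show a ≤ u by rw [Fin.le_def, huval]; omega)
  have hdav : deg G v ≤ deg G a := by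
    simp only [hG]
    exact hA (show a ≤ v by rw [Fin.le_def, hvval]; omega)
  by_cases hbu : b = u
  · rw [hbu] at hnadj
    obtain ⟨H, h1, h2⟩ := easy_case G u v a hGuv hau hav hdau hdav (Or.inr hnadj)
    exact ⟨H, fun i => (h1 i).trans (hG i), h2⟩
  by_cases hbv : b = v
  · rw [hbv] at hnadj
    obtain ⟨H, h1, h2⟩ := easy_case G u v a hGuv hau hav hdau hdav (Or.inl hnadj)
    exact ⟨H, fun i => (h1 i).trans (hG i), h2⟩
  have hbval : b.val < r - 1 := by
    have h1 : b.val ≠ r - 1 := fun h => hbu (Fin.ext (h.trans huval.symm))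
    have h2 : b.val ≠ r := fun h => hbv (Fin.ext (h.trans hvval.symm))
    omega
  have hdbu : deg G u ≤ deg G b := by
    simp only [hG]
    exact hA (show b ≤ u by rw [Fin.le_def, huval]; omega)
  have hdbv : deg G v ≤ deg G b := by
    simp only [hG]
    exact hA (show b ≤ v by rw [Fin.le_def, hvval]; omega)
  by_cases hav2 : G.Adj a v
  swap
  · obtain ⟨H, h1, h2⟩ := easy_case G u v a hGuv hau hav hdau hdav (Or.inl hav2)
    exact ⟨H, fun i => (h1 i).trans (hG i), h2⟩
  by_cases hau2 : G.Adj a u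
  swap
  · obtain ⟨H, h1, h2⟩ := easy_case G u v a hGuv hau hav hdau hdav (Or.inr hau2)
    exact ⟨H, fun i => (h1 i).trans (hG i), h2⟩
  by_cases hbv2 : G.Adj b v
  swap
  · obtain ⟨H, h1, h2⟩ := easy_case G u v b hGuv hbu hbv hdbu hdbv (Or.inl hbv2)
    exact ⟨H, fun i => (h1 i).trans (hG i), h2⟩
  obtain ⟨w, hbw, hvw, hwb, hwv, hwa⟩ :=
    find_w G b v a hav2.symm (fun h => hnadj h.symm) hbv hab.symm hdbv
  obtain ⟨G2, hdeg2, hchar⟩ :=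
    switch_exists G a v b w hav2 hbw hnadj hvw hab hwv.symm hwa.symm
      (fun h => hbv h.symm)
  have hG2uv : G2.Adj u v := by
    rw [hchar]
    refine Or.inl ⟨hGuv, ?_⟩
    rintro (⟨h1, h2⟩ | ⟨h1, h2⟩ | ⟨h1, h2⟩ | ⟨h1, h2⟩)
    · exact hau h1.symm
    · exact huv h1
    · exact hbu h1.symm
    · exact hbv h2.symm
  have hG2av : ¬G2.Adj a v := by
    rw [hchar]
    rintro (⟨_, h2⟩ | (⟨h1, h2⟩ | ⟨h1, h2⟩ | ⟨h1, h2⟩ | ⟨h1, h2⟩))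
    · exact h2 (Or.inl ⟨rfl, rfl⟩)
    · exact hbv h2.symm
    · exact hab h1
    · exact hwv h2.symm
    · exact hwa h1.symm
  obtain ⟨H, hH1, hH2⟩ := resolve G2 a u v hG2uv hG2av hau hav
    (by rw [hdeg2, hdeg2]; exact hdau)
  exact ⟨H, fun i => ((hH1 i).trans (hdeg2 i)).trans (hG i), hH2⟩


/-- If the subgraph of a realization `G` induced by the first `r+1` vertices has at most
`C(r+1,2) - 1` edges, then there is a realization `H` of `π` with the same degrees on the
first `r+1` vertices in which `v_r` and `v_{r+1}` are nonadjacent. -/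
theorem stmt_11 (r n : ℕ) (hr : 1 ≤ r) (hn : r + 1 ≤ n) (d : Fin n → ℕ)
    (hA : Antitone d) (G : SimpleGraph (Fin n)) (hG : ∀ i, deg G i = d i)
    (hEdges : Set.ncard {e ∈ G.edgeSet | ∀ v ∈ e, v.val < r + 1} ≤ (r + 1) * r / 2 - 1) :
    ∃ H : SimpleGraph (Fin n),
      Finset.univ.val.map (deg H) = Finset.univ.val.map d ∧
      (∀ i : Fin n, i.val < r + 1 → deg H i = d i) ∧
      ¬ H.Adj ⟨r - 1, by omega⟩ ⟨r, by omega⟩ := by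
  obtain ⟨H, h1, h2⟩ := core r n hr hn d hA G hG hEdges ⟨r - 1, by omega⟩ ⟨r, by omega⟩
    rfl rfl
  exact ⟨H, Multiset.map_congr rfl (fun i _ => h1 i), fun i _ => h1 i, h2⟩
end
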